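/- arXiv:2312.11200 — 3 statements merged into one kernel-verified Lean document; each statement's English description precedes it below -/
import Mathlib

section
/- For every real p > 0, the function k(X) = log(Tr(X^{−p})) is convex on the convex cone of symmetric positive definite n×n real matrices: for all symmetric positive definite A, B and all γ ∈ [0,1], log Tr((γA + (1−γ)B)^{−p}) ≤ γ·log Tr(A^{−p}) + (1−γ)·log Tr(B^{−p}). -/
open Matrix

/-- Largest eigenvalue of a (Hermitian) real matrix. -/
noncomputable def eigMax {n : ℕ} (M : Matrix (Fin n) (Fin n) ℝ) : ℝ :=
  if h : M.IsHermitian then ⨆ i, h.eigenvalues i else 0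

/-- Smallest eigenvalue of a (Hermitian) real matrix. -/
noncomputable def eigMin {n : ℕ} (M : Matrix (Fin n) (Fin n) ℝ) : ℝ :=
  if h : M.IsHermitian then ⨅ i, h.eigenvalues i else 0

/-- Spectral norm (largest singular value) of a real matrix. -/
noncomputable def specNorm {m n : ℕ} (A : Matrix (Fin m) (Fin n) ℝ) : ℝ :=
  Real.sqrt (eigMax (Aᵀ * A))

/-- Real power of a symmetric matrix, via the spectral decomposition:
`M ^ r` has the same eigenvectors as `M` and eigenvalues `λᵢ ^ r`. -/
noncomputable def mpow {n : ℕ} (M : Matrix (Fin n) (Fin n) ℝ) (r : ℝ) :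
    Matrix (Fin n) (Fin n) ℝ :=
  if h : M.IsHermitian then
    (h.eigenvectorUnitary : Matrix (Fin n) (Fin n) ℝ) *
      Matrix.diagonal (fun i => h.eigenvalues i ^ r) *
      (star h.eigenvectorUnitary : Matrix (Fin n) (Fin n) ℝ)
  else 0

/-- Frobenius norm of a real matrix. -/
noncomputable def frobNorm {m n : ℕ} (M : Matrix (Fin m) (Fin n) ℝ) : ℝ :=
  Real.sqrt ((Mᵀ * M).trace)


open Real MeasureTheory Filter Topology Set


variable {n : ℕ}

/-- trace of `R * (V * diagonal d * star V)`. -/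
lemma trace_conj_diag (R V : Matrix (Fin n) (Fin n) ℝ) (d : Fin n → ℝ) :
    (R * (V * diagonal d * star V)).trace
      = ∑ j, d j * ((star V * R * V) j j) := by
  have h1 : R * (V * diagonal d * star V) = (R * V) * diagonal d * star V := by
    noncomm_ring
  rw [h1, trace_mul_cycle]
  have h2 : star V * (R * V) * diagonal d = (star V * R * V) * diagonal d := by
    noncomm_ring
  rw [h2, Matrix.trace]
  congr 1
  ext j
  simp [Matrix.diag, Matrix.mul_diagonal, mul_comm]

lemma conj_entry_eq_quadform (R V : Matrix (Fin n) (Fin n) ℝ) (j : Fin n) :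
    (star V * R * V) j j = (fun k => V k j) ⬝ᵥ (R *ᵥ fun k => V k j) := by
  simp only [Matrix.mul_apply, Matrix.star_apply, dotProduct, Matrix.mulVec,
    dotProduct, star_trivial]
  simp only [Finset.sum_mul, Finset.mul_sum]
  rw [Finset.sum_comm]
  congr 1; ext k
  congr 1; ext l
  ring

lemma posDef_smul {X : Matrix (Fin n) (Fin n) ℝ} (hX : X.PosDef) {c : ℝ} (hc : 0 < c) :
    (c • X).PosDef := by
  refine Matrix.PosDef.of_dotProduct_mulVec_pos ?_ fun x hx => ?_
  · unfold Matrix.IsHermitian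
    rw [conjTranspose_smul, hX.1.eq, star_trivial]
  · rw [smul_mulVec, dotProduct_smul, smul_eq_mul]
    exact mul_pos hc (hX.dotProduct_mulVec_pos hx)

lemma posSemidef_smul_one {s : ℝ} (hs : 0 ≤ s) :
    ((s • 1 : Matrix (Fin n) (Fin n) ℝ)).PosSemidef := by
  rw [smul_one_eq_diagonal]
  exact Matrix.posSemidef_diagonal_iff.2 fun i => hs

lemma posDef_add_smul_one {X : Matrix (Fin n) (Fin n) ℝ} (hX : X.PosDef) {s : ℝ} (hs : 0 ≤ s) :
    (X + s • 1).PosDef :=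
  hX.add_posSemidef (posSemidef_smul_one hs)

lemma quadform_inv_le {M : Matrix (Fin n) (Fin n) ℝ} (hM : M.PosDef)
    (v w : Fin n → ℝ) :
    2 * (w ⬝ᵥ v) - w ⬝ᵥ (M *ᵥ w) ≤ v ⬝ᵥ (M⁻¹ *ᵥ v) := by
  have hdet : IsUnit M.det := hM.det_pos.ne'.isUnit
  have hminv : M * M⁻¹ = 1 := Matrix.mul_nonsing_inv M hdet
  set z : Fin n → ℝ := M⁻¹ *ᵥ v with hz
  have hMz : M *ᵥ z = v := by
    rw [hz, Matrix.mulVec_mulVec, hminv, Matrix.one_mulVec]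
  have h0 : 0 ≤ (w - z) ⬝ᵥ (M *ᵥ (w - z)) := by
    have := hM.posSemidef.dotProduct_mulVec_nonneg (w - z)
    simpa [star_trivial] using this
  have hsym : z ⬝ᵥ (M *ᵥ w) = w ⬝ᵥ v := by
    rw [Matrix.dotProduct_mulVec, ← Matrix.mulVec_transpose]
    have ht : Mᵀ = M := by
      have := hM.1.eq
      rwa [conjTranspose_eq_transpose_of_trivial] at this
    rw [ht, hMz, dotProduct_comm]
  have hexp : (w - z) ⬝ᵥ (M *ᵥ (w - z))
      = w ⬝ᵥ (M *ᵥ w) - 2 * (w ⬝ᵥ v) + v ⬝ᵥ (M⁻¹ *ᵥ v) := by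
    rw [Matrix.mulVec_sub, sub_dotProduct, dotProduct_sub, dotProduct_sub, hMz, hsym]
    have hzv : z ⬝ᵥ v = v ⬝ᵥ M⁻¹ *ᵥ v := by rw [hz]; exact dotProduct_comm _ _
    linarith [hzv]
  rw [hexp] at h0
  linarith

lemma quadform_inv_convex {A B : Matrix (Fin n) (Fin n) ℝ} (hA : A.PosDef) (hB : B.PosDef)
    {γ : ℝ} (hγ0 : 0 ≤ γ) (hγ1 : γ ≤ 1) (hM : (γ • A + (1 - γ) • B).PosDef) (v : Fin n → ℝ) :
    v ⬝ᵥ ((γ • A + (1 - γ) • B)⁻¹ *ᵥ v)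
      ≤ γ * (v ⬝ᵥ (A⁻¹ *ᵥ v)) + (1 - γ) * (v ⬝ᵥ (B⁻¹ *ᵥ v)) := by
  set M := γ • A + (1 - γ) • B with hMdef
  have hdet : IsUnit M.det := hM.det_pos.ne'.isUnit
  set w : Fin n → ℝ := M⁻¹ *ᵥ v with hw
  have hMw : M *ᵥ w = v := by
    rw [hw, Matrix.mulVec_mulVec, Matrix.mul_nonsing_inv M hdet, Matrix.one_mulVec]
  have hwv : w ⬝ᵥ v = v ⬝ᵥ (M⁻¹ *ᵥ v) := by rw [hw]; exact dotProduct_comm _ _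
  have hsplit : w ⬝ᵥ (M *ᵥ w) = γ * (w ⬝ᵥ (A *ᵥ w)) + (1 - γ) * (w ⬝ᵥ (B *ᵥ w)) := by
    rw [hMdef, Matrix.add_mulVec, dotProduct_add, smul_mulVec, smul_mulVec,
      dotProduct_smul, dotProduct_smul, smul_eq_mul, smul_eq_mul]
  have key : v ⬝ᵥ (M⁻¹ *ᵥ v)
      = γ * (2 * (w ⬝ᵥ v) - w ⬝ᵥ (A *ᵥ w)) + (1 - γ) * (2 * (w ⬝ᵥ v) - w ⬝ᵥ (B *ᵥ w)) := by
    have h1 : w ⬝ᵥ (M *ᵥ w) = w ⬝ᵥ v := by rw [hMw]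
    have h2 := hsplit.symm.trans h1
    linarith [hwv]
  rw [key]
  have ha := quadform_inv_le hA v w
  have hb := quadform_inv_le hB v w
  have := mul_le_mul_of_nonneg_left ha hγ0
  have := mul_le_mul_of_nonneg_left hb (by linarith : (0:ℝ) ≤ 1 - γ)
  linarith

lemma trace_inv_convex {A B : Matrix (Fin n) (Fin n) ℝ} (hA : A.PosDef) (hB : B.PosDef)
    {γ : ℝ} (hγ0 : 0 ≤ γ) (hγ1 : γ ≤ 1) (hM : (γ • A + (1 - γ) • B).PosDef)
    (U : Matrix (Fin n) (Fin n) ℝ) (q : Fin n → ℝ) (hq : ∀ i, 0 ≤ q i) :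
    ((U * diagonal q * star U) * (γ • A + (1 - γ) • B)⁻¹).trace
      ≤ γ * ((U * diagonal q * star U) * A⁻¹).trace
        + (1 - γ) * ((U * diagonal q * star U) * B⁻¹).trace := by
  have key : ∀ C : Matrix (Fin n) (Fin n) ℝ,
      ((U * diagonal q * star U) * C).trace = ∑ i, q i * ((star U * C * U) i i) := by
    intro C
    rw [Matrix.trace_mul_comm, trace_conj_diag]
  rw [key, key, key, Finset.mul_sum, Finset.mul_sum, ← Finset.sum_add_distrib]
  refine Finset.sum_le_sum fun i _ => ?_
  rw [conj_entry_eq_quadform, conj_entry_eq_quadform, conj_entry_eq_quadform]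
  have h := quadform_inv_convex hA hB hγ0 hγ1 hM (fun k => U k i)
  have h2 := mul_le_mul_of_nonneg_left h (hq i)
  rw [mul_add] at h2
  calc q i * ((fun k => U k i) ⬝ᵥ ((γ • A + (1 - γ) • B)⁻¹ *ᵥ fun k => U k i))
      ≤ q i * (γ * ((fun k => U k i) ⬝ᵥ (A⁻¹ *ᵥ fun k => U k i)))
        + q i * ((1 - γ) * ((fun k => U k i) ⬝ᵥ (B⁻¹ *ᵥ fun k => U k i))) := h2
    _ = _ := by ring
variable {n : ℕ}

section unitary
variable {V : Matrix (Fin n) (Fin n) ℝ}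

lemma unitary_conj_diag_mul (hV : V ∈ Matrix.unitaryGroup (Fin n) ℝ) (d e : Fin n → ℝ) :
    (V * diagonal d * star V) * (V * diagonal e * star V)
      = V * diagonal (fun i => d i * e i) * star V := by
  have h1 : star V * V = 1 := mem_unitaryGroup_iff'.mp hV
  calc (V * diagonal d * star V) * (V * diagonal e * star V)
      = V * diagonal d * (star V * V) * diagonal e * star V := by noncomm_ring
    _ = V * (diagonal d * diagonal e) * star V := by rw [h1]; noncomm_ring
    _ = V * diagonal (fun i => d i * e i) * star V := by
        rw [diagonal_mul_diagonal]

lemma unitary_conj_diag_inv (hV : V ∈ Matrix.unitaryGroup (Fin n) ℝ) (d : Fin n → ℝ) (hd : ∀ i, d i ≠ 0) :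
    (V * diagonal d * star V)⁻¹ = V * diagonal (fun i => (d i)⁻¹) * star V := by
  apply Matrix.inv_eq_right_inv
  rw [unitary_conj_diag_mul hV]
  have : (fun i => d i * (d i)⁻¹) = fun _ => (1:ℝ) := by
    funext i; exact mul_inv_cancel₀ (hd i)
  rw [this]
  have h2 : V * star V = 1 := mem_unitaryGroup_iff.mp hV
  rw [show (diagonal (fun _ => (1:ℝ)) : Matrix (Fin n) (Fin n) ℝ) = 1 from diagonal_one,
    mul_one, h2]

end unitary

lemma spectral_real (X : Matrix (Fin n) (Fin n) ℝ) (hX : X.IsHermitian) :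
    X = (hX.eigenvectorUnitary : Matrix (Fin n) (Fin n) ℝ) * diagonal hX.eigenvalues
      * star (hX.eigenvectorUnitary : Matrix (Fin n) (Fin n) ℝ) := by
  have := hX.spectral_theorem
  simpa [RCLike.ofReal_real_eq_id] using this

lemma add_smul_one_eq (X : Matrix (Fin n) (Fin n) ℝ) (hX : X.IsHermitian) (s : ℝ) :
    X + s • 1 = (hX.eigenvectorUnitary : Matrix (Fin n) (Fin n) ℝ)
      * diagonal (fun j => hX.eigenvalues j + s)
      * star (hX.eigenvectorUnitary : Matrix (Fin n) (Fin n) ℝ) := by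
  set U := (hX.eigenvectorUnitary : Matrix (Fin n) (Fin n) ℝ) with hU
  have h2 : U * star U = 1 := mem_unitaryGroup_iff.mp hX.eigenvectorUnitary.2
  have hd : (diagonal (fun j => hX.eigenvalues j + s) : Matrix (Fin n) (Fin n) ℝ)
      = diagonal hX.eigenvalues + s • 1 := by
    rw [smul_one_eq_diagonal, ← diagonal_add]
  rw [hd, Matrix.mul_add, Matrix.add_mul]
  congr 1
  · exact spectral_real X hX
  · rw [Matrix.mul_smul, Matrix.smul_mul, mul_one, h2]

lemma mpow_eq (X : Matrix (Fin n) (Fin n) ℝ) (hX : X.IsHermitian) (r : ℝ) :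
    mpow X r = (hX.eigenvectorUnitary : Matrix (Fin n) (Fin n) ℝ)
      * diagonal (fun i => hX.eigenvalues i ^ r)
      * star (hX.eigenvectorUnitary : Matrix (Fin n) (Fin n) ℝ) := by
  rw [mpow, dif_pos hX]

lemma trace_mpow (X : Matrix (Fin n) (Fin n) ℝ) (hX : X.IsHermitian) (r : ℝ) :
    (mpow X r).trace = ∑ i, hX.eigenvalues i ^ r := by
  rw [mpow_eq X hX r, Matrix.trace_mul_cycle]
  have h1 : star (hX.eigenvectorUnitary : Matrix (Fin n) (Fin n) ℝ)
      * (hX.eigenvectorUnitary : Matrix (Fin n) (Fin n) ℝ) = 1 :=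
    mem_unitaryGroup_iff'.mp hX.eigenvectorUnitary.2
  rw [h1, Matrix.one_mul, trace_diagonal]

/-- helper: for `0 < a ≤ b`, integral of `(a+s)⁻¹ - (b+s)⁻¹` over `Ioi 0`. -/
lemma integral_resolvent_aux {a b : ℝ} (ha : 0 < a) (hab : a ≤ b) :
    IntegrableOn (fun s => (a + s)⁻¹ - (b + s)⁻¹) (Ioi (0:ℝ)) ∧
      ∫ s in Ioi (0:ℝ), ((a + s)⁻¹ - (b + s)⁻¹) = Real.log b - Real.log a := by
  have hb : 0 < b := lt_of_lt_of_le ha hab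
  set g : ℝ → ℝ := fun s => Real.log (a + s) - Real.log (b + s) with hg
  have hderiv : ∀ x ∈ Ici (0:ℝ), HasDerivAt g ((a + x)⁻¹ - (b + x)⁻¹) x := by
    intro x hx
    have hx0 : (0:ℝ) ≤ x := hx
    have h1 : HasDerivAt (fun s : ℝ => a + s) 1 x := (hasDerivAt_id x).const_add a
    have h2 : HasDerivAt (fun s : ℝ => b + s) 1 x := (hasDerivAt_id x).const_add b
    have ha' : a + x ≠ 0 := by positivity
    have hb' : b + x ≠ 0 := by positivity
    have l1 : HasDerivAt (fun s : ℝ => Real.log (a + s)) ((a + x)⁻¹ * 1) x :=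
      (Real.hasDerivAt_log ha').comp x h1
    have l2 : HasDerivAt (fun s : ℝ => Real.log (b + s)) ((b + x)⁻¹ * 1) x :=
      (Real.hasDerivAt_log hb').comp x h2
    have l3 := l1.sub l2
    rw [mul_one, mul_one] at l3
    exact l3
  have hpos : ∀ x ∈ Ioi (0:ℝ), 0 ≤ (a + x)⁻¹ - (b + x)⁻¹ := by
    intro x hx
    have hx0 : (0:ℝ) < x := hx
    have : (b + x)⁻¹ ≤ (a + x)⁻¹ := by
      apply inv_anti₀ (by positivity) (by linarith)
    linarith
  have htend : Tendsto g atTop (𝓝 0) := by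
    have hratio : Tendsto (fun s : ℝ => (a + s) / (b + s)) atTop (𝓝 1) := by
      have h1 : Tendsto (fun s : ℝ => a * s⁻¹ + 1) atTop (𝓝 (a * 0 + 1)) :=
        ((tendsto_inv_atTop_zero).const_mul a).add tendsto_const_nhds
      have h2 : Tendsto (fun s : ℝ => b * s⁻¹ + 1) atTop (𝓝 (b * 0 + 1)) :=
        ((tendsto_inv_atTop_zero).const_mul b).add tendsto_const_nhds
      have h3 : Tendsto (fun s : ℝ => (a * s⁻¹ + 1) / (b * s⁻¹ + 1)) atTop
          (𝓝 ((a * 0 + 1) / (b * 0 + 1))) := h1.div h2 (by norm_num)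
      simp only [mul_zero, zero_add, one_div_one, div_one] at h3
      apply h3.congr'
      filter_upwards [eventually_gt_atTop (0:ℝ)] with s hs
      field_simp
    have hlog : Tendsto (fun s : ℝ => Real.log ((a + s) / (b + s))) atTop (𝓝 (Real.log 1)) :=
      ((Real.continuousAt_log one_ne_zero).tendsto).comp hratio
    rw [Real.log_one] at hlog
    apply hlog.congr'
    filter_upwards [eventually_gt_atTop (0:ℝ)] with s hs
    rw [Real.log_div (by positivity) (by positivity)]
  constructor
  · exact integrableOn_Ioi_deriv_of_nonneg' hderiv hpos htend
  · have := integral_Ioi_of_hasDerivAt_of_nonneg' hderiv hpos htend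
    rw [this, hg]
    simp only [add_zero]
    ring

lemma integral_resolvent_scalar {lam : ℝ} (hl : 0 < lam) :
    IntegrableOn (fun s => (1 + s)⁻¹ - (lam + s)⁻¹) (Ioi (0:ℝ)) ∧
      ∫ s in Ioi (0:ℝ), ((1 + s)⁻¹ - (lam + s)⁻¹) = Real.log lam := by
  rcases le_or_gt 1 lam with h | h
  · have := integral_resolvent_aux one_pos h
    simpa using this
  · have h2 := integral_resolvent_aux hl h.le
    have hneg : (fun s : ℝ => (1 + s)⁻¹ - (lam + s)⁻¹)
        = fun s => -((lam + s)⁻¹ - (1 + s)⁻¹) := by funext s; ring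
    constructor
    · rw [hneg]; exact h2.1.neg
    · rw [hneg, MeasureTheory.integral_neg, h2.2]
      simp

/-- The diagonal vector of `ρ` conjugated into the eigenbasis of `X`. -/
noncomputable def cvec (ρ : Matrix (Fin n) (Fin n) ℝ) {X : Matrix (Fin n) (Fin n) ℝ}
    (hX : X.IsHermitian) (j : Fin n) : ℝ :=
  (star (hX.eigenvectorUnitary : Matrix (Fin n) (Fin n) ℝ) * ρ *
    (hX.eigenvectorUnitary : Matrix (Fin n) (Fin n) ℝ)) j j

/-- `Tr(ρ log X)` computed spectrally. -/
noncomputable def tval (ρ : Matrix (Fin n) (Fin n) ℝ) {X : Matrix (Fin n) (Fin n) ℝ}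
    (hX : X.IsHermitian) : ℝ :=
  ∑ j, cvec ρ hX j * Real.log (hX.eigenvalues j)

lemma cvec_sum (ρ : Matrix (Fin n) (Fin n) ℝ) {X : Matrix (Fin n) (Fin n) ℝ}
    (hX : X.IsHermitian) : ∑ j, cvec ρ hX j = ρ.trace := by
  have h2 : (hX.eigenvectorUnitary : Matrix (Fin n) (Fin n) ℝ)
      * star (hX.eigenvectorUnitary : Matrix (Fin n) (Fin n) ℝ) = 1 :=
    mem_unitaryGroup_iff.mp hX.eigenvectorUnitary.2
  have h3 : ∑ j, cvec ρ hX j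
      = (star (hX.eigenvectorUnitary : Matrix (Fin n) (Fin n) ℝ) * ρ *
          (hX.eigenvectorUnitary : Matrix (Fin n) (Fin n) ℝ)).trace := by
    simp [cvec, Matrix.trace, Matrix.diag]
  rw [h3, Matrix.trace_mul_cycle, h2, Matrix.one_mul]

lemma trace_resolvent {X : Matrix (Fin n) (Fin n) ℝ} (hX : X.PosDef)
    (ρ : Matrix (Fin n) (Fin n) ℝ) {s : ℝ} (hs : 0 < s) :
    (ρ * (X + s • 1)⁻¹).trace = ∑ j, (hX.1.eigenvalues j + s)⁻¹ * cvec ρ hX.1 j := by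
  rw [add_smul_one_eq X hX.1 s, unitary_conj_diag_inv hX.1.eigenvectorUnitary.2 _
    (fun j => by have := hX.eigenvalues_pos j; positivity), trace_conj_diag]
  rfl

lemma tval_integral {X : Matrix (Fin n) (Fin n) ℝ} (hX : X.PosDef)
    (ρ : Matrix (Fin n) (Fin n) ℝ) :
    IntegrableOn (fun s => ∑ j, cvec ρ hX.1 j *
        ((1 + s)⁻¹ - (hX.1.eigenvalues j + s)⁻¹)) (Ioi (0:ℝ)) ∧
      ∫ s in Ioi (0:ℝ), (∑ j, cvec ρ hX.1 j *
        ((1 + s)⁻¹ - (hX.1.eigenvalues j + s)⁻¹)) = tval ρ hX.1 := by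
  have hint : ∀ j : Fin n, IntegrableOn
      (fun s => cvec ρ hX.1 j * ((1 + s)⁻¹ - (hX.1.eigenvalues j + s)⁻¹)) (Ioi (0:ℝ)) :=
    fun j => ((integral_resolvent_scalar (hX.eigenvalues_pos j)).1).const_mul _
  constructor
  · exact MeasureTheory.integrable_finset_sum Finset.univ fun j _ => hint j
  · rw [MeasureTheory.integral_finset_sum Finset.univ fun j _ => hint j]
    refine Finset.sum_congr rfl fun j _ => ?_
    rw [MeasureTheory.integral_const_mul, (integral_resolvent_scalar (hX.eigenvalues_pos j)).2]

lemma tval_concave {A B : Matrix (Fin n) (Fin n) ℝ} (hA : A.PosDef) (hB : B.PosDef)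
    {γ : ℝ} (hγ0 : 0 ≤ γ) (hγ1 : γ ≤ 1) (hX : (γ • A + (1 - γ) • B).PosDef)
    (U : Matrix (Fin n) (Fin n) ℝ) (q : Fin n → ℝ) (hq : ∀ i, 0 ≤ q i) :
    γ * tval (U * Matrix.diagonal q * star U) hA.1
        + (1 - γ) * tval (U * Matrix.diagonal q * star U) hB.1
      ≤ tval (U * Matrix.diagonal q * star U) hX.1 := by
  set ρ := U * Matrix.diagonal q * star U with hρ
  obtain ⟨iX, vX⟩ := tval_integral hX ρ
  obtain ⟨iA, vA⟩ := tval_integral hA ρ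
  obtain ⟨iB, vB⟩ := tval_integral hB ρ
  have hexpand : ∀ {Y : Matrix (Fin n) (Fin n) ℝ} (hY : Y.PosDef) (s : ℝ), 0 < s →
      (∑ j, cvec ρ hY.1 j * ((1 + s)⁻¹ - (hY.1.eigenvalues j + s)⁻¹))
        = ρ.trace * (1 + s)⁻¹ - (ρ * (Y + s • 1)⁻¹).trace := by
    intro Y hY s hs
    rw [trace_resolvent hY ρ hs, ← cvec_sum ρ hY.1, Finset.sum_mul, ← Finset.sum_sub_distrib]
    refine Finset.sum_congr rfl fun j _ => ?_
    ring
  have hpt : ∀ s ∈ Ioi (0:ℝ),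
      0 ≤ (∑ j, cvec ρ hX.1 j * ((1 + s)⁻¹ - (hX.1.eigenvalues j + s)⁻¹))
        - (γ * (∑ j, cvec ρ hA.1 j * ((1 + s)⁻¹ - (hA.1.eigenvalues j + s)⁻¹))
          + (1 - γ) * (∑ j, cvec ρ hB.1 j * ((1 + s)⁻¹ - (hB.1.eigenvalues j + s)⁻¹))) := by
    intro s hs
    have hs' : (0:ℝ) < s := hs
    rw [hexpand hX s hs', hexpand hA s hs', hexpand hB s hs']
    have hcomb : γ • (A + s • 1) + (1 - γ) • (B + s • 1)
        = (γ • A + (1 - γ) • B) + s • (1 : Matrix (Fin n) (Fin n) ℝ) := by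
      module
    have hXs : (γ • (A + s • 1) + (1 - γ) • (B + s • 1)).PosDef := by
      rw [hcomb]; exact posDef_add_smul_one hX hs'.le
    have hconv := trace_inv_convex (posDef_add_smul_one hA hs'.le)
      (posDef_add_smul_one hB hs'.le) hγ0 hγ1 hXs U q hq
    rw [hcomb, ← hρ] at hconv
    nlinarith [hconv]
  have hsub : IntegrableOn (fun s =>
      (∑ j, cvec ρ hX.1 j * ((1 + s)⁻¹ - (hX.1.eigenvalues j + s)⁻¹))
        - (γ * (∑ j, cvec ρ hA.1 j * ((1 + s)⁻¹ - (hA.1.eigenvalues j + s)⁻¹))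
          + (1 - γ) * (∑ j, cvec ρ hB.1 j * ((1 + s)⁻¹ - (hB.1.eigenvalues j + s)⁻¹))))
      (Ioi (0:ℝ)) := iX.sub ((iA.const_mul γ).add (iB.const_mul (1 - γ)))
  have hge := setIntegral_nonneg (μ := MeasureTheory.volume) measurableSet_Ioi hpt
  have hgint : IntegrableOn (fun s =>
      γ * (∑ j, cvec ρ hA.1 j * ((1 + s)⁻¹ - (hA.1.eigenvalues j + s)⁻¹))
      + (1 - γ) * (∑ j, cvec ρ hB.1 j * ((1 + s)⁻¹ - (hB.1.eigenvalues j + s)⁻¹)))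
      (Ioi (0:ℝ)) := (iA.const_mul γ).add (iB.const_mul (1 - γ))
  rw [MeasureTheory.integral_sub iX hgint,
    MeasureTheory.integral_add (iA.const_mul γ) (iB.const_mul (1 - γ)),
    MeasureTheory.integral_const_mul, MeasureTheory.integral_const_mul, vX, vA, vB] at hge
  linarith

lemma conj_diag_entry (N : Matrix (Fin n) (Fin n) ℝ) (q : Fin n → ℝ) (j : Fin n) :
    (star N * Matrix.diagonal q * N) j j = ∑ i, q i * (N i j)^2 := by
  rw [Matrix.mul_apply]
  refine Finset.sum_congr rfl fun k _ => ?_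
  rw [Matrix.mul_diagonal]
  simp only [Matrix.star_apply, star_trivial]
  ring

lemma gibbs_ub {Y : Matrix (Fin n) (Fin n) ℝ} (hY : Y.PosDef) (p : ℝ)
    {U : Matrix (Fin n) (Fin n) ℝ} (hU : U ∈ Matrix.unitaryGroup (Fin n) ℝ)
    {q : Fin n → ℝ} (hq : ∀ i, 0 < q i) (hq1 : ∑ i, q i = 1) :
    (-p) * tval (U * Matrix.diagonal q * star U) hY.1 - ∑ i, q i * Real.log (q i)
      ≤ Real.log (∑ j, hY.1.eigenvalues j ^ (-p)) := by
  set V := (hY.1.eigenvectorUnitary : Matrix (Fin n) (Fin n) ℝ) with hVdef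
  have hV : V ∈ Matrix.unitaryGroup (Fin n) ℝ := hY.1.eigenvectorUnitary.2
  have hμpos : ∀ j, 0 < hY.1.eigenvalues j := fun j => hY.eigenvalues_pos j
  set μ := hY.1.eigenvalues with hμ
  set N := star U * V with hN
  have hNsq1 : ∀ i, ∑ j, (N i j)^2 = 1 := by
    intro i
    have h1 : N * star N = 1 := by
      rw [hN, Matrix.star_mul, star_star]
      calc star U * V * (star V * U) = star U * (V * star V) * U := by noncomm_ring
        _ = 1 := by rw [mem_unitaryGroup_iff.mp hV, Matrix.mul_one,
              mem_unitaryGroup_iff'.mp hU]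
    have h2 := congrArg (fun M : Matrix (Fin n) (Fin n) ℝ => M i i) h1
    simp only [Matrix.mul_apply, Matrix.star_apply, star_trivial, Matrix.one_apply_eq] at h2
    rw [← h2]
    refine Finset.sum_congr rfl fun k _ => ?_
    ring
  have hNsq2 : ∀ j, ∑ i, (N i j)^2 = 1 := by
    intro j
    have h1 : star N * N = 1 := by
      rw [hN, Matrix.star_mul, star_star]
      calc star V * U * (star U * V) = star V * (U * star U) * V := by noncomm_ring
        _ = 1 := by rw [mem_unitaryGroup_iff.mp hU, Matrix.mul_one,
              mem_unitaryGroup_iff'.mp hV]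
    have h2 := congrArg (fun M : Matrix (Fin n) (Fin n) ℝ => M j j) h1
    simp only [Matrix.mul_apply, Matrix.star_apply, star_trivial, Matrix.one_apply_eq] at h2
    rw [← h2]
    refine Finset.sum_congr rfl fun k _ => ?_
    ring
  have hcvec : ∀ j, cvec (U * Matrix.diagonal q * star U) hY.1 j = ∑ i, q i * (N i j)^2 := by
    intro j
    have h1 : star V * (U * Matrix.diagonal q * star U) * V
        = star N * Matrix.diagonal q * N := by
      rw [hN, Matrix.star_mul, star_star]
      noncomm_ring
    simp only [cvec]
    rw [← hVdef, h1, conj_diag_entry]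
  have hcc : ConcaveOn ℝ (Ioi (0:ℝ)) Real.log := strictConcaveOn_log_Ioi.concaveOn
  have jensen : (∑ ij : Fin n × Fin n,
        (q ij.1 * (N ij.1 ij.2)^2) • Real.log ((μ ij.2 ^ (-p)) / q ij.1))
      ≤ Real.log (∑ ij : Fin n × Fin n,
        (q ij.1 * (N ij.1 ij.2)^2) • ((μ ij.2 ^ (-p)) / q ij.1)) := by
    refine hcc.le_map_sum (fun ij _ => mul_nonneg (hq ij.1).le (sq_nonneg _)) ?_
      (fun ij _ => Set.mem_Ioi.mpr (div_pos (Real.rpow_pos_of_pos (hμpos ij.2) _) (hq ij.1)))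
    rw [Fintype.sum_prod_type]
    calc ∑ i, ∑ j, q i * (N i j)^2 = ∑ i, q i * ∑ j, (N i j)^2 := by
          refine Finset.sum_congr rfl fun i _ => ?_; rw [Finset.mul_sum]
      _ = 1 := by simp only [hNsq1, mul_one]; exact hq1
  have hRHS : ∑ ij : Fin n × Fin n, (q ij.1 * (N ij.1 ij.2)^2) • ((μ ij.2 ^ (-p)) / q ij.1)
      = ∑ j, μ j ^ (-p) := by
    rw [Fintype.sum_prod_type_right]
    refine Finset.sum_congr rfl fun j _ => ?_
    calc ∑ i, (q i * (N i j)^2) • ((μ j ^ (-p)) / q i)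
        = ∑ i, (N i j)^2 * μ j ^ (-p) := by
          refine Finset.sum_congr rfl fun i _ => ?_
          rw [smul_eq_mul]
          field_simp [(hq i).ne']
      _ = (∑ i, (N i j)^2) * μ j ^ (-p) := by rw [Finset.sum_mul]
      _ = μ j ^ (-p) := by rw [hNsq2 j, one_mul]
  have hterm : ∀ i j, (q i * (N i j)^2) • Real.log ((μ j ^ (-p)) / q i)
      = q i * (N i j)^2 * ((-p) * Real.log (μ j)) - q i * (N i j)^2 * Real.log (q i) := by
    intro i j
    rw [smul_eq_mul, Real.log_div (Real.rpow_pos_of_pos (hμpos j) _).ne' (hq i).ne',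
      Real.log_rpow (hμpos j)]
    ring
  have hLHS : (∑ ij : Fin n × Fin n,
        (q ij.1 * (N ij.1 ij.2)^2) • Real.log ((μ ij.2 ^ (-p)) / q ij.1))
      = (-p) * tval (U * Matrix.diagonal q * star U) hY.1 - ∑ i, q i * Real.log (q i) := by
    rw [Fintype.sum_prod_type]
    have e0 : ∀ i, ∑ j, (q i * (N i j)^2) • Real.log ((μ j ^ (-p)) / q i)
        = (∑ j, q i * (N i j)^2 * ((-p) * Real.log (μ j))) - q i * Real.log (q i) := by
      intro i
      calc ∑ j, (q i * (N i j)^2) • Real.log ((μ j ^ (-p)) / q i)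
          = ∑ j, (q i * (N i j)^2 * ((-p) * Real.log (μ j))
              - q i * (N i j)^2 * Real.log (q i)) := by
            refine Finset.sum_congr rfl fun j _ => hterm i j
        _ = (∑ j, q i * (N i j)^2 * ((-p) * Real.log (μ j)))
              - ∑ j, q i * (N i j)^2 * Real.log (q i) := Finset.sum_sub_distrib _ _
        _ = (∑ j, q i * (N i j)^2 * ((-p) * Real.log (μ j))) - q i * Real.log (q i) := by
            congr 1
            calc ∑ j, q i * (N i j)^2 * Real.log (q i)
                = (∑ j, (N i j)^2) * (q i * Real.log (q i)) := by
                  rw [Finset.sum_mul]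
                  refine Finset.sum_congr rfl fun j _ => ?_
                  ring
              _ = q i * Real.log (q i) := by rw [hNsq1 i, one_mul]
    simp only [e0]
    rw [Finset.sum_sub_distrib]
    congr 1
    simp only [tval]
    have e1 : ∑ j, cvec (U * Matrix.diagonal q * star U) hY.1 j * Real.log (hY.1.eigenvalues j)
        = ∑ j, (∑ i, q i * (N i j)^2) * Real.log (μ j) := by
      refine Finset.sum_congr rfl fun j _ => ?_
      rw [hcvec j, ← hμ]
    rw [e1, Finset.sum_comm, Finset.mul_sum]
    refine Finset.sum_congr rfl fun j _ => ?_
    rw [Finset.sum_mul, Finset.mul_sum]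
    refine Finset.sum_congr rfl fun i _ => ?_
    ring
  rw [← hLHS, ← hRHS]
  exact jensen


/-- For every `p > 0`, `k(X) = log(Tr(X^{−p}))` is convex on the cone of
symmetric positive definite matrices:
`log Tr((γA + (1−γ)B)^{−p}) ≤ γ·log Tr(A^{−p}) + (1−γ)·log Tr(B^{−p})` for `γ ∈ [0,1]`. -/
theorem log_trace_power_convex (n : ℕ) (p : ℝ) (hp : 0 < p)
    (A B : Matrix (Fin n) (Fin n) ℝ) (hA : A.PosDef) (hB : B.PosDef)
    (γ : ℝ) (hγ0 : 0 ≤ γ) (hγ1 : γ ≤ 1) :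
    Real.log (mpow (γ • A + (1 - γ) • B) (-p)).trace ≤
      γ * Real.log (mpow A (-p)).trace + (1 - γ) * Real.log (mpow B (-p)).trace := by
  rcases Nat.eq_zero_or_pos n with hn | hn
  · subst hn
    have e : ∀ M : Matrix (Fin 0) (Fin 0) ℝ, M.trace = 0 := fun M => by
      simp [Matrix.trace]
    rw [e, e, e, Real.log_zero]
    norm_num
  rcases eq_or_lt_of_le hγ0 with h0 | h0
  · rw [← h0]
    have e : (0:ℝ) • A + (1 - 0:ℝ) • B = B := by module
    rw [e]
    norm_num
  rcases eq_or_lt_of_le hγ1 with h1 | h1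
  · rw [h1]
    have e : (1:ℝ) • A + (1 - 1:ℝ) • B = A := by module
    rw [e]
    norm_num
  haveI : Nonempty (Fin n) := ⟨⟨0, hn⟩⟩
  have hXpd : (γ • A + (1 - γ) • B).PosDef :=
    (posDef_smul hA h0).add (posDef_smul hB (by linarith))
  set X := γ • A + (1 - γ) • B with hXdef
  set U := (hXpd.1.eigenvectorUnitary : Matrix (Fin n) (Fin n) ℝ) with hUdef
  have hUmem : U ∈ Matrix.unitaryGroup (Fin n) ℝ := hXpd.1.eigenvectorUnitary.2
  have hlam : ∀ j, 0 < hXpd.1.eigenvalues j := fun j => hXpd.eigenvalues_pos j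
  set c := ∑ j, hXpd.1.eigenvalues j ^ (-p) with hcdef
  have hcpos : 0 < c := Finset.sum_pos (fun j _ => Real.rpow_pos_of_pos (hlam j) _)
    Finset.univ_nonempty
  set q : Fin n → ℝ := fun j => hXpd.1.eigenvalues j ^ (-p) / c with hqdef
  have hq : ∀ i, 0 < q i := fun i => div_pos (Real.rpow_pos_of_pos (hlam i) _) hcpos
  have hq1 : ∑ i, q i = 1 := by
    simp only [hqdef]
    rw [← Finset.sum_div, ← hcdef]
    exact div_self hcpos.ne'
  have htr : (mpow X (-p)).trace = c := by
    rw [trace_mpow X hXpd.1 (-p)]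
  have hcvecX : ∀ j, cvec (U * Matrix.diagonal q * star U) hXpd.1 j = q j := by
    intro j
    have hUU : star U * U = 1 := mem_unitaryGroup_iff'.mp hUmem
    have h1 : star U * (U * Matrix.diagonal q * star U) * U = Matrix.diagonal q := by
      calc star U * (U * Matrix.diagonal q * star U) * U
          = (star U * U) * Matrix.diagonal q * (star U * U) := by noncomm_ring
        _ = Matrix.diagonal q := by rw [hUU, Matrix.one_mul, Matrix.mul_one]
    simp only [cvec]
    rw [← hUdef, h1, Matrix.diagonal_apply_eq]
  have htv : tval (U * Matrix.diagonal q * star U) hXpd.1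
      = ∑ j, q j * Real.log (hXpd.1.eigenvalues j) := by
    simp only [tval]
    exact Finset.sum_congr rfl fun j _ => by rw [hcvecX j]
  have hlogq : ∀ j, Real.log (q j) = (-p) * Real.log (hXpd.1.eigenvalues j) - Real.log c := by
    intro j
    have hqj : q j = hXpd.1.eigenvalues j ^ (-p) / c := rfl
    rw [hqj, Real.log_div (Real.rpow_pos_of_pos (hlam j) _).ne' hcpos.ne',
      Real.log_rpow (hlam j)]
  have hsum : ∑ i, q i * Real.log (q i)
      = (-p) * (∑ j, q j * Real.log (hXpd.1.eigenvalues j)) - Real.log c := by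
    calc ∑ i, q i * Real.log (q i)
        = ∑ i, (q i * ((-p) * Real.log (hXpd.1.eigenvalues i)) - q i * Real.log c) := by
          refine Finset.sum_congr rfl fun i _ => ?_
          rw [hlogq i]; ring
      _ = (∑ i, q i * ((-p) * Real.log (hXpd.1.eigenvalues i))) - (∑ i, q i) * Real.log c := by
          rw [Finset.sum_sub_distrib, Finset.sum_mul]
      _ = (-p) * (∑ j, q j * Real.log (hXpd.1.eigenvalues j)) - Real.log c := by
          rw [hq1, one_mul, Finset.mul_sum]
          congr 1
          refine Finset.sum_congr rfl fun i _ => ?_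
          ring
  have heq : Real.log c = (-p) * tval (U * Matrix.diagonal q * star U) hXpd.1
      - ∑ i, q i * Real.log (q i) := by
    rw [htv]; linarith [hsum]
  have hGA := gibbs_ub hA p hUmem hq hq1
  have hGB := gibbs_ub hB p hUmem hq hq1
  rw [← trace_mpow A hA.1 (-p)] at hGA
  rw [← trace_mpow B hB.1 (-p)] at hGB
  have hconc := tval_concave hA hB hγ0 hγ1 hXpd U q (fun i => (hq i).le)
  rw [htr]
  have hc1 := mul_le_mul_of_nonneg_left hGA hγ0
  have hc2 := mul_le_mul_of_nonneg_left hGB (by linarith : (0:ℝ) ≤ 1 - γ)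
  have hmul := mul_nonneg (sub_nonneg.mpr hconc) hp.le
  linarith [heq, hc1, hc2, hmul]
end

section
/- Let X be a symmetric positive definite n×n real matrix, B a symmetric n×n real matrix, and r a real number. Then the function h(t) = Tr((X + tB)^r), defined for t in a neighborhood of 0 (where X + tB remains positive definite), is differentiable at 0 with h'(0) = r·Tr(X^{r−1}·B). Equivalently, the gradient of X ↦ Tr(X^r) at a positive definite X, with respect to the Frobenius inner product on symmetric matrices, is r·X^{r−1}. -/
open Matrix

namespace MpowAux
variable {n : ℕ}

noncomputable def Uu {M : Matrix (Fin n) (Fin n) ℝ} (hM : M.IsHermitian) :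
    Matrix (Fin n) (Fin n) ℝ := hM.eigenvectorUnitary

lemma star_U_mul_U {M : Matrix (Fin n) (Fin n) ℝ} (hM : M.IsHermitian) :
    star (Uu hM) * Uu hM = 1 := Unitary.coe_star_mul_self _

lemma U_mul_star_U {M : Matrix (Fin n) (Fin n) ℝ} (hM : M.IsHermitian) :
    Uu hM * star (Uu hM) = 1 := Unitary.coe_mul_star_self _

/-- spectral functional calculus -/
noncomputable def amap (f : ℝ → ℝ) {M : Matrix (Fin n) (Fin n) ℝ} (hM : M.IsHermitian) :
    Matrix (Fin n) (Fin n) ℝ :=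
  Uu hM * Matrix.diagonal (fun i => f (hM.eigenvalues i)) * star (Uu hM)

lemma amap_id {M : Matrix (Fin n) (Fin n) ℝ} (hM : M.IsHermitian) :
    amap (fun x => x) hM = M := by
  conv_rhs => rw [hM.spectral_theorem]
  simp [amap, Uu, RCLike.ofReal_real_eq_id, Function.comp]

lemma mpow_eq_amap {M : Matrix (Fin n) (Fin n) ℝ} (hM : M.IsHermitian) (r : ℝ) :
    mpow M r = amap (fun x => x ^ r) hM := by
  rw [mpow, dif_pos hM]; rfl

lemma amap_mul_amap (f g : ℝ → ℝ) {M : Matrix (Fin n) (Fin n) ℝ} (hM : M.IsHermitian) :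
    amap f hM * amap g hM = amap (fun x => f x * g x) hM := by
  unfold amap
  have h1 := star_U_mul_U hM
  calc Uu hM * diagonal (fun i => f (hM.eigenvalues i)) * star (Uu hM) *
        (Uu hM * diagonal (fun i => g (hM.eigenvalues i)) * star (Uu hM))
      = Uu hM * diagonal (fun i => f (hM.eigenvalues i)) * (star (Uu hM) * Uu hM) *
        diagonal (fun i => g (hM.eigenvalues i)) * star (Uu hM) := by
        simp only [mul_assoc]
    _ = Uu hM * (diagonal (fun i => f (hM.eigenvalues i)) *
        diagonal (fun i => g (hM.eigenvalues i))) * star (Uu hM) := by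
        rw [h1]; simp only [mul_one, mul_assoc]
    _ = _ := by rw [diagonal_mul_diagonal]

lemma amap_one {M : Matrix (Fin n) (Fin n) ℝ} (hM : M.IsHermitian) :
    amap (fun _ => 1) hM = 1 := by
  unfold amap
  rw [diagonal_one, mul_one, U_mul_star_U]

lemma amap_pow (k : ℕ) {M : Matrix (Fin n) (Fin n) ℝ} (hM : M.IsHermitian) :
    M ^ k = amap (fun x => x ^ k) hM := by
  induction k with
  | zero => simpa using (amap_one hM).symm
  | succ m ih =>
      rw [pow_succ, ih]
      nth_rewrite 2 [← amap_id hM]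
      rw [amap_mul_amap]
      simp [pow_succ]

lemma trace_diagonal_mul (d : Fin n → ℝ) (A : Matrix (Fin n) (Fin n) ℝ) :
    (Matrix.diagonal d * A).trace = ∑ k, d k * A k k := by
  simp [Matrix.trace, Matrix.diag, Matrix.diagonal_mul]

lemma trace_amap_mul (f : ℝ → ℝ) {M : Matrix (Fin n) (Fin n) ℝ} (hM : M.IsHermitian)
    (B : Matrix (Fin n) (Fin n) ℝ) :
    (amap f hM * B).trace = ∑ k, f (hM.eigenvalues k) * (star (Uu hM) * B * Uu hM) k k := by
  unfold amap
  rw [show Uu hM * diagonal (fun i => f (hM.eigenvalues i)) * star (Uu hM) * B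
      = Uu hM * (diagonal (fun i => f (hM.eigenvalues i)) * (star (Uu hM) * B)) by
      simp only [mul_assoc]]
  rw [Matrix.trace_mul_comm]
  rw [show diagonal (fun i => f (hM.eigenvalues i)) * (star (Uu hM) * B) * Uu hM
      = diagonal (fun i => f (hM.eigenvalues i)) * (star (Uu hM) * B * Uu hM) by
      simp only [mul_assoc]]
  rw [trace_diagonal_mul]

lemma trace_amap (f : ℝ → ℝ) {M : Matrix (Fin n) (Fin n) ℝ} (hM : M.IsHermitian) :
    (amap f hM).trace = ∑ k, f (hM.eigenvalues k) := by
  have := trace_amap_mul f hM 1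
  simpa [star_U_mul_U hM] using this

lemma dot_unitary (W : Matrix (Fin n) (Fin n) ℝ) (hW : Wᵀ * W = 1) (x y : Fin n → ℝ) :
    (W *ᵥ x) ⬝ᵥ (W *ᵥ y) = x ⬝ᵥ y := by
  rw [dotProduct_mulVec, vecMul_mulVec, hW, vecMul_one]

lemma star_U_transpose {M : Matrix (Fin n) (Fin n) ℝ} (hM : M.IsHermitian) :
    (star (Uu hM))ᵀ = Uu hM := by
  rw [Matrix.star_eq_conjTranspose, conjTranspose_eq_transpose_of_trivial,
    Matrix.transpose_transpose]

lemma spectral' {M : Matrix (Fin n) (Fin n) ℝ} (hM : M.IsHermitian) :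
    M = Uu hM * Matrix.diagonal (fun i => hM.eigenvalues i) * star (Uu hM) := by
  have h := hM.spectral_theorem
  rw [RCLike.ofReal_real_eq_id] at h
  exact h

lemma starU_norm {M : Matrix (Fin n) (Fin n) ℝ} (hM : M.IsHermitian) (v : Fin n → ℝ) :
    (star (Uu hM) *ᵥ v) ⬝ᵥ (star (Uu hM) *ᵥ v) = v ⬝ᵥ v := by
  apply dot_unitary
  rw [star_U_transpose]
  exact U_mul_star_U hM

lemma dot_mulVec_eq {M : Matrix (Fin n) (Fin n) ℝ} (hM : M.IsHermitian) (v : Fin n → ℝ) :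
    v ⬝ᵥ (M *ᵥ v) = ∑ k, hM.eigenvalues k * ((star (Uu hM) *ᵥ v) k)^2 := by
  conv_lhs => rw [spectral' hM]
  rw [← Matrix.mulVec_mulVec, ← Matrix.mulVec_mulVec]
  rw [dotProduct_mulVec (A := (Uu hM : Matrix (Fin n) (Fin n) ℝ))]
  rw [show v ᵥ* Uu hM = star (Uu hM) *ᵥ v by
    rw [Matrix.star_eq_conjTranspose, conjTranspose_eq_transpose_of_trivial,
      Matrix.mulVec_transpose]]
  simp only [dotProduct, Matrix.mulVec_diagonal]
  exact Finset.sum_congr rfl fun k _ => by ring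
lemma col_unit {M : Matrix (Fin n) (Fin n) ℝ} (hM : M.IsHermitian) (i : Fin n) :
    (fun k => Uu hM k i) ⬝ᵥ (fun k => Uu hM k i) = 1 := by
  have h := congrArg (fun A => A i i) (star_U_mul_U hM)
  simpa [Matrix.mul_apply, Matrix.star_apply, Matrix.one_apply, dotProduct] using h

lemma eig_eq_dot {M : Matrix (Fin n) (Fin n) ℝ} (hM : M.IsHermitian) (i : Fin n) :
    hM.eigenvalues i = (fun k => Uu hM k i) ⬝ᵥ (M *ᵥ fun k => Uu hM k i) := by
  have h := hM.eigenvalues_eq i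
  have hv : ⇑(hM.eigenvectorBasis i) = fun k => Uu hM k i := by
    funext k; exact (hM.eigenvectorUnitary_apply k i).symm
  rw [hv] at h
  simpa using h

lemma abs_dot_le (A : Matrix (Fin n) (Fin n) ℝ) (v : Fin n → ℝ) (hv : ∀ k, |v k| ≤ 1) :
    |v ⬝ᵥ (A *ᵥ v)| ≤ ∑ i, ∑ j, |A i j| := by
  simp only [dotProduct, Matrix.mulVec, dotProduct]
  calc |∑ i, v i * ∑ j, A i j * v j| ≤ ∑ i, |v i * ∑ j, A i j * v j| :=
        Finset.abs_sum_le_sum_abs _ _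
    _ ≤ ∑ i, ∑ j, |A i j| := by
        refine Finset.sum_le_sum fun i _ => ?_
        rw [abs_mul]
        have h2 : |∑ j, A i j * v j| ≤ ∑ j, |A i j| := by
          calc |∑ j, A i j * v j| ≤ ∑ j, |A i j * v j| := Finset.abs_sum_le_sum_abs _ _
            _ ≤ ∑ j, |A i j| := Finset.sum_le_sum fun j _ => by
                rw [abs_mul]; exact mul_le_of_le_one_right (abs_nonneg _) (hv j)
        calc |v i| * |∑ j, A i j * v j| ≤ 1 * (∑ j, |A i j|) :=
              mul_le_mul (hv i) h2 (abs_nonneg _) zero_le_one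
          _ = ∑ j, |A i j| := one_mul _

lemma unit_entry_le {v : Fin n → ℝ} (hv : v ⬝ᵥ v = 1) (k : Fin n) : |v k| ≤ 1 := by
  rw [abs_le_one_iff_mul_self_le_one]
  rw [← hv]
  simp only [dotProduct]
  exact Finset.single_le_sum (fun j _ => mul_self_nonneg (v j)) (Finset.mem_univ k)

lemma quad_lower {M : Matrix (Fin n) (Fin n) ℝ} (hM : M.IsHermitian) (c : ℝ)
    (hc : ∀ k, c ≤ hM.eigenvalues k) (v : Fin n → ℝ) :
    c * (v ⬝ᵥ v) ≤ v ⬝ᵥ (M *ᵥ v) := by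
  rw [dot_mulVec_eq hM v, ← starU_norm hM v]
  have : (star (Uu hM) *ᵥ v) ⬝ᵥ (star (Uu hM) *ᵥ v)
      = ∑ k, ((star (Uu hM) *ᵥ v) k)^2 := by
    simp [dotProduct, sq]
  rw [this, Finset.mul_sum]
  exact Finset.sum_le_sum fun k _ =>
    mul_le_mul_of_nonneg_right (hc k) (sq_nonneg _)
section MatDeriv

attribute [local instance] Matrix.linftyOpNormedAddCommGroup Matrix.linftyOpNormedRing
  Matrix.linftyOpNormedSpace Matrix.linftyOpNormedAlgebra

variable (X B : Matrix (Fin n) (Fin n) ℝ)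

lemma hasDerivAt_affine (t : ℝ) : HasDerivAt (fun s : ℝ => X + s • B) B t := by
  have h := ((hasDerivAt_id t).smul_const B).const_add X
  simp only [id_eq, one_smul] at h
  exact h

lemma hasDerivAt_pow_mat (k : ℕ) (t : ℝ) :
    HasDerivAt (fun s : ℝ => (X + s • B) ^ k)
      (∑ j ∈ Finset.range k, (X + t • B) ^ j * B * (X + t • B) ^ (k - 1 - j)) t := by
  induction k with
  | zero =>
    simp only [pow_zero, Finset.range_zero, Finset.sum_empty]
    exact hasDerivAt_const t (1 : Matrix (Fin n) (Fin n) ℝ)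
  | succ m ih =>
      have h := ih.mul (hasDerivAt_affine X B t)
      have heq : (∑ j ∈ Finset.range m, (X + t • B) ^ j * B * (X + t • B) ^ (m - 1 - j)) *
            (X + t • B) + (X + t • B) ^ m * B
          = ∑ j ∈ Finset.range (m + 1), (X + t • B) ^ j * B * (X + t • B) ^ (m + 1 - 1 - j) := by
        rw [Finset.sum_range_succ, Finset.sum_mul]
        congr 1
        · refine Finset.sum_congr rfl fun j hj => ?_
          rw [Finset.mem_range] at hj
          simp only [mul_assoc, ← pow_succ,
            show m - 1 - j + 1 = m + 1 - 1 - j from by omega]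
        · simp
      have h2 : (fun s : ℝ => (X + s • B) ^ m * (X + s • B)) = fun s => (X + s • B) ^ (m + 1) := by
        funext s; rw [← pow_succ]
      simp only [Pi.mul_def] at h
      rw [h2, heq] at h
      exact h

noncomputable def traceCLM : Matrix (Fin n) (Fin n) ℝ →L[ℝ] ℝ :=
  LinearMap.toContinuousLinearMap (Matrix.traceLinearMap (Fin n) ℝ ℝ)

lemma hasDerivAt_trace_pow (k : ℕ) (t : ℝ) :
    HasDerivAt (fun s : ℝ => ((X + s • B) ^ k).trace)
      ((k : ℝ) * (((X + t • B) ^ (k - 1) * B).trace)) t := by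
  have h := ((traceCLM (n := n)).hasFDerivAt.comp_hasDerivAt t (hasDerivAt_pow_mat X B k t))
  have htr : traceCLM (n := n) (∑ j ∈ Finset.range k, (X + t • B) ^ j * B * (X + t • B) ^ (k - 1 - j))
      = (k : ℝ) * (((X + t • B) ^ (k - 1) * B).trace) := by
    have : ∀ j ∈ Finset.range k,
        ((X + t • B) ^ j * B * (X + t • B) ^ (k - 1 - j)).trace
          = (((X + t • B) ^ (k - 1) * B).trace) := by
      intro j hj
      rw [Finset.mem_range] at hj
      rw [Matrix.trace_mul_cycle, ← pow_add,
        show k - 1 - j + j = k - 1 from by omega]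
    have hc : ∀ A : Matrix (Fin n) (Fin n) ℝ, traceCLM (n := n) A = A.trace := fun A => rfl
    rw [hc, Matrix.trace_sum, Finset.sum_congr rfl this, Finset.sum_const, Finset.card_range,
      nsmul_eq_mul]
  exact htr ▸ h

end MatDeriv
lemma isHermitian_smul_real (t : ℝ) {B : Matrix (Fin n) (Fin n) ℝ} (hB : B.IsHermitian) :
    (t • B).IsHermitian := by
  unfold Matrix.IsHermitian at *
  rw [Matrix.conjTranspose_smul, hB]
  simp

/-- polynomial antiderivative -/
noncomputable def pint (p : Polynomial ℝ) : Polynomial ℝ :=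
  p.sum fun i c => Polynomial.C (c / (i + 1)) * Polynomial.X ^ (i + 1)

lemma derivative_pint (p : Polynomial ℝ) : (pint p).derivative = p := by
  unfold pint
  rw [Polynomial.sum, map_sum]
  have : ∀ i ∈ p.support,
      Polynomial.derivative (Polynomial.C (p.coeff i / (i + 1)) * Polynomial.X ^ (i + 1))
        = Polynomial.C (p.coeff i) * Polynomial.X ^ i := by
    intro i _
    rw [Polynomial.derivative_C_mul_X_pow, Nat.add_sub_cancel]
    congr 1
    push_cast
    field_simp
  rw [Finset.sum_congr rfl this]
  exact Polynomial.sum_C_mul_X_pow_eq p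
noncomputable def wk {M : Matrix (Fin n) (Fin n) ℝ} (hM : M.IsHermitian)
    (B : Matrix (Fin n) (Fin n) ℝ) (k : Fin n) : ℝ :=
  (star (Uu hM) * B * Uu hM) k k

lemma wk_eq_dot {M : Matrix (Fin n) (Fin n) ℝ} (hM : M.IsHermitian)
    (B : Matrix (Fin n) (Fin n) ℝ) (k : Fin n) :
    wk hM B k = (fun i => Uu hM i k) ⬝ᵥ (B *ᵥ fun i => Uu hM i k) := by
  simp only [wk, Matrix.mul_apply, Matrix.star_apply, star_trivial, dotProduct, Matrix.mulVec]
  simp_rw [Finset.sum_mul, Finset.mul_sum]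
  rw [Finset.sum_comm]
  exact Finset.sum_congr rfl fun i _ => Finset.sum_congr rfl fun j _ => by ring

lemma abs_wk_le {M : Matrix (Fin n) (Fin n) ℝ} (hM : M.IsHermitian)
    (B : Matrix (Fin n) (Fin n) ℝ) (k : Fin n) :
    |wk hM B k| ≤ ∑ i, ∑ j, |B i j| := by
  rw [wk_eq_dot]
  exact abs_dot_le B _ (fun i => unit_entry_le (col_unit hM k) i)

section Main

variable {X B : Matrix (Fin n) (Fin n) ℝ}

lemma hHerm (hX : X.IsHermitian) (hB : B.IsHermitian) (t : ℝ) :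
    (X + t • B).IsHermitian := hX.add (isHermitian_smul_real t hB)

lemma trace_pow_eq (hX : X.IsHermitian) (hB : B.IsHermitian) (t : ℝ) (i : ℕ) :
    ((X + t • B) ^ i).trace = ∑ k, ((hHerm hX hB t).eigenvalues k) ^ i := by
  rw [amap_pow i (hHerm hX hB t), trace_amap]

lemma trace_pow_mul_eq (hX : X.IsHermitian) (hB : B.IsHermitian) (t : ℝ) (i : ℕ) :
    ((X + t • B) ^ i * B).trace
      = ∑ k, ((hHerm hX hB t).eigenvalues k) ^ i * wk (hHerm hX hB t) B k := by
  rw [amap_pow i (hHerm hX hB t), trace_amap_mul]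
  rfl

lemma F_eq (hX : X.IsHermitian) (hB : B.IsHermitian) (p : Polynomial ℝ) (t : ℝ) :
    (∑ i ∈ p.support, p.coeff i * ((X + t • B) ^ i).trace)
      = ∑ k, p.eval ((hHerm hX hB t).eigenvalues k) := by
  rw [Finset.sum_congr rfl fun i _ => by rw [trace_pow_eq hX hB t i]]
  simp_rw [Finset.mul_sum]
  rw [Finset.sum_comm]
  refine Finset.sum_congr rfl fun k _ => ?_
  rw [Polynomial.eval_eq_sum, Polynomial.sum]

lemma hasDerivAt_F (hX : X.IsHermitian) (hB : B.IsHermitian) (p : Polynomial ℝ) (t : ℝ) :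
    HasDerivAt (fun s => ∑ i ∈ p.support, p.coeff i * ((X + s • B) ^ i).trace)
      (∑ k, p.derivative.eval ((hHerm hX hB t).eigenvalues k) * wk (hHerm hX hB t) B k) t := by
  have h := HasDerivAt.sum
    (fun i (_ : i ∈ p.support) => ((hasDerivAt_trace_pow X B i t).const_mul (p.coeff i)))
  have key : (∑ i ∈ p.support, p.coeff i * ((i : ℝ) * (((X + t • B) ^ (i - 1) * B).trace)))
      = ∑ k, p.derivative.eval ((hHerm hX hB t).eigenvalues k) * wk (hHerm hX hB t) B k := by
    rw [Finset.sum_congr rfl fun i _ => by rw [trace_pow_mul_eq hX hB t (i - 1)]]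
    simp_rw [Finset.mul_sum]
    rw [Finset.sum_comm]
    refine Finset.sum_congr rfl fun k _ => ?_
    rw [Polynomial.derivative_eval, Polynomial.sum, Finset.sum_mul]
    refine Finset.sum_congr rfl fun i _ => by ring
  rw [← key]
  rw [Finset.sum_fn] at h
  exact h

end Main
lemma trace_mpow {M : Matrix (Fin n) (Fin n) ℝ} (hM : M.IsHermitian) (r : ℝ) :
    (mpow M r).trace = ∑ k, hM.eigenvalues k ^ r := by
  rw [mpow_eq_amap hM, trace_amap]

lemma trace_mpow_mul {M : Matrix (Fin n) (Fin n) ℝ} (hM : M.IsHermitian) (r : ℝ)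
    (B : Matrix (Fin n) (Fin n) ℝ) :
    (mpow M r * B).trace = ∑ k, hM.eigenvalues k ^ r * wk hM B k := by
  rw [mpow_eq_amap hM, trace_amap_mul]
  rfl
end MpowAux

open MpowAux

/-- For `X ≻ 0` symmetric, `B` symmetric and `r : ℝ`, the function
`h(t) = Tr((X + tB)^r)` is differentiable at `0` with `h'(0) = r·Tr(X^{r−1}·B)`
(equivalently, the Frobenius gradient of `X ↦ Tr(X^r)` at `X` is `r·X^{r−1}`). -/
theorem deriv_trace_mpow (n : ℕ) (r : ℝ)
    (X B : Matrix (Fin n) (Fin n) ℝ) (hX : X.PosDef) (hB : B.IsHermitian) :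
    HasDerivAt (fun t : ℝ => (mpow (X + t • B) r).trace)
      (r * (mpow X (r - 1) * B).trace) 0 := by
  classical
  rcases Nat.eq_zero_or_pos n with hn | hn
  · subst hn
    have h0 : ∀ M : Matrix (Fin 0) (Fin 0) ℝ, M.trace = 0 := fun M => by
      simp [Matrix.trace]
    have hfun : (fun t : ℝ => (mpow (X + t • B) r).trace) = fun _ => (0 : ℝ) :=
      funext fun t => h0 _
    rw [hfun, h0, mul_zero]
    exact hasDerivAt_const _ _
  haveI : Nonempty (Fin n) := ⟨⟨0, hn⟩⟩
  have hXh : X.IsHermitian := hX.1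
  set lam : ℝ := Finset.univ.inf' Finset.univ_nonempty hXh.eigenvalues with hlam
  have hlam_pos : 0 < lam := by
    rw [hlam, Finset.lt_inf'_iff]
    exact fun i _ => hX.eigenvalues_pos i
  have hlam_le : ∀ i, lam ≤ hXh.eigenvalues i := fun i =>
    Finset.inf'_le _ (Finset.mem_univ i)
  set KB : ℝ := ∑ i, ∑ j, |B i j| with hKB
  set KX : ℝ := ∑ i, ∑ j, |X i j| with hKX
  have hKB0 : 0 ≤ KB := Finset.sum_nonneg fun i _ => Finset.sum_nonneg fun j _ => abs_nonneg _
  have hKX0 : 0 ≤ KX := Finset.sum_nonneg fun i _ => Finset.sum_nonneg fun j _ => abs_nonneg _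
  set δ : ℝ := lam / (2 * (KB + 1)) with hδ
  have hδpos : 0 < δ := div_pos hlam_pos (by linarith)
  set a : ℝ := lam / 2 with ha
  set b : ℝ := KX + lam with hb
  have hapos : 0 < a := by rw [ha]; linarith
  have hab : a ≤ b := by rw [ha, hb]; linarith
  have htKB : ∀ t : ℝ, |t| ≤ δ → |t| * KB ≤ lam / 2 := by
    intro t ht
    have h1 : |t| * KB ≤ δ * KB := mul_le_mul_of_nonneg_right ht hKB0
    have h2 : δ * KB ≤ lam / 2 := by
      rw [hδ, div_mul_eq_mul_div, div_le_div_iff₀ (by linarith) (by norm_num)]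
      nlinarith
    linarith
  set s : Set ℝ := Set.Ioo (-δ) δ with hs
  have hsopen : IsOpen s := isOpen_Ioo
  have h0s : (0 : ℝ) ∈ s := ⟨by linarith, hδpos⟩
  set lamf : ℝ → Fin n → ℝ := fun t => (hHerm hXh hB t).eigenvalues with hlamf
  have EIG : ∀ t ∈ s, ∀ k, lamf t k ∈ Set.Icc a b := by
    intro t ht k
    have htabs : |t| ≤ δ := le_of_lt (abs_lt.mpr ⟨ht.1, ht.2⟩)
    set c : Fin n → ℝ := fun i => Uu (hHerm hXh hB t) i k with hc
    have hunit : c ⬝ᵥ c = 1 := col_unit _ k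
    have hentry : ∀ i, |c i| ≤ 1 := unit_entry_le hunit
    have heig : lamf t k = c ⬝ᵥ (X *ᵥ c) + t * (c ⬝ᵥ (B *ᵥ c)) := by
      show (hHerm hXh hB t).eigenvalues k = _
      rw [eig_eq_dot (hHerm hXh hB t) k]
      rw [Matrix.add_mulVec, Matrix.smul_mulVec, dotProduct_add, dotProduct_smul,
        smul_eq_mul]
    have hXc_low : lam ≤ c ⬝ᵥ (X *ᵥ c) := by
      have h := quad_lower hXh lam hlam_le c
      rw [hunit, mul_one] at h
      exact h
    have hXc_up : c ⬝ᵥ (X *ᵥ c) ≤ KX := le_trans (le_abs_self _) (abs_dot_le X c hentry)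
    have hBc : |c ⬝ᵥ (B *ᵥ c)| ≤ KB := abs_dot_le B c hentry
    have htB : |t * (c ⬝ᵥ (B *ᵥ c))| ≤ lam / 2 := by
      rw [abs_mul]
      have h1 : |t| * |c ⬝ᵥ (B *ᵥ c)| ≤ |t| * KB :=
        mul_le_mul_of_nonneg_left hBc (abs_nonneg t)
      linarith [htKB t htabs]
    have habs := abs_le.mp htB
    constructor
    · rw [heig, ha]; linarith
    · rw [heig, hb]; linarith
  have WK : ∀ t k, |wk (hHerm hXh hB t) B k| ≤ KB := fun t k => abs_wk_le _ B k
  have hg'cont : ContinuousOn (fun x : ℝ => r * x ^ (r - 1)) (Set.Icc a b) := by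
    apply ContinuousOn.mul continuousOn_const
    apply ContinuousOn.rpow_const continuousOn_id
    intro x hx
    exact Or.inl (ne_of_gt (lt_of_lt_of_le hapos hx.1))
  have hsel : ∀ m : ℕ, ∃ qq : Polynomial ℝ, ∀ x ∈ Set.Icc a b,
      |qq.eval x - r * x ^ (r - 1)| < 1 / (m + 1) := fun m =>
    exists_polynomial_near_of_continuousOn a b _ hg'cont _ (by positivity)
  choose q hq using hsel
  set P : ℕ → Polynomial ℝ := fun m =>
    pint (q m) + Polynomial.C (a ^ r - (pint (q m)).eval a) with hP
  have hPd : ∀ m, (P m).derivative = q m := fun m => by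
    rw [hP]
    simp [derivative_pint]
  have hPa : ∀ m, (P m).eval a = a ^ r := fun m => by
    rw [hP]
    simp
  have hPval : ∀ m, ∀ x ∈ Set.Icc a b, |(P m).eval x - x ^ r| ≤ (1 / (m + 1)) * (b - a) := by
    intro m x hx
    have hd : ∀ y ∈ Set.Icc a b, HasDerivWithinAt (fun y : ℝ => (P m).eval y - y ^ r)
        ((q m).eval y - r * y ^ (r - 1)) (Set.Icc a b) y := by
      intro y hy
      have h1 : HasDerivAt (fun y : ℝ => (P m).eval y) ((q m).eval y) y := by
        have h := Polynomial.hasDerivAt (P m) y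
        rwa [hPd m] at h
      have h2 : HasDerivAt (fun y : ℝ => y ^ r) (r * y ^ (r - 1)) y :=
        Real.hasDerivAt_rpow_const (Or.inl (ne_of_gt (lt_of_lt_of_le hapos hy.1)))
      exact (h1.sub h2).hasDerivWithinAt
    have hbound : ∀ y ∈ Set.Icc a b, ‖(q m).eval y - r * y ^ (r - 1)‖ ≤ 1 / (m + 1) :=
      fun y hy => le_of_lt (hq m y hy)
    have hmvt := Convex.norm_image_sub_le_of_norm_hasDerivWithin_le hd hbound (convex_Icc a b)
      (Set.left_mem_Icc.mpr hab) hx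
    have hxa : ‖x - a‖ ≤ b - a := by
      rw [Real.norm_eq_abs, abs_of_nonneg (by linarith [hx.1])]
      linarith [hx.2]
    calc |(P m).eval x - x ^ r|
        = ‖(P m).eval x - x ^ r - ((P m).eval a - a ^ r)‖ := by
          rw [hPa m, sub_self, sub_zero, Real.norm_eq_abs]
      _ ≤ (1 / (m + 1)) * ‖x - a‖ := hmvt
      _ ≤ (1 / (m + 1)) * (b - a) := mul_le_mul_of_nonneg_left hxa (by positivity)
  set F : ℕ → ℝ → ℝ := fun m t =>
    ∑ i ∈ (P m).support, (P m).coeff i * ((X + t • B) ^ i).trace with hF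
  set F' : ℕ → ℝ → ℝ := fun m t =>
    ∑ k, (q m).eval (lamf t k) * wk (hHerm hXh hB t) B k with hF'
  have hFderiv : ∀ m : ℕ, ∀ t ∈ s, HasDerivAt (F m) (F' m t) t := by
    intro m t _
    have h := hasDerivAt_F hXh hB (P m) t
    rwa [hPd m] at h
  set φ : ℝ → ℝ := fun t => r * (mpow (X + t • B) (r - 1) * B).trace with hφ
  have hφ_eq : ∀ t, φ t = ∑ k, (r * (lamf t k) ^ (r - 1)) * wk (hHerm hXh hB t) B k := by
    intro t
    rw [hφ]
    show r * (mpow (X + t • B) (r - 1) * B).trace = _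
    rw [trace_mpow_mul (hHerm hXh hB t) (r - 1) B, Finset.mul_sum]
    exact Finset.sum_congr rfl fun k _ => by ring
  have hunif : TendstoUniformlyOn F' φ Filter.atTop s := by
    rw [Metric.tendstoUniformlyOn_iff]
    intro ε hε
    have hlim : Filter.Tendsto (fun m : ℕ => ((n : ℝ) * KB) * (1 / (m + 1)))
        Filter.atTop (nhds 0) := by
      simpa using tendsto_one_div_add_atTop_nhds_zero_nat.const_mul ((n : ℝ) * KB)
    filter_upwards [hlim.eventually (gt_mem_nhds hε)] with m hm t ht
    rw [Real.dist_eq, hφ_eq t]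
    have hbd : |∑ k, (r * (lamf t k) ^ (r - 1)) * wk (hHerm hXh hB t) B k - F' m t|
        ≤ ((n : ℝ) * KB) * (1 / (m + 1)) := by
      rw [hF']
      rw [← Finset.sum_sub_distrib]
      calc |∑ k, ((r * (lamf t k) ^ (r - 1)) * wk (hHerm hXh hB t) B k
              - (q m).eval (lamf t k) * wk (hHerm hXh hB t) B k)|
          ≤ ∑ k, |(r * (lamf t k) ^ (r - 1)) * wk (hHerm hXh hB t) B k
              - (q m).eval (lamf t k) * wk (hHerm hXh hB t) B k| :=
            Finset.abs_sum_le_sum_abs _ _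
        _ ≤ ∑ _k : Fin n, (1 / (m + 1)) * KB := by
            refine Finset.sum_le_sum fun k _ => ?_
            rw [show (r * (lamf t k) ^ (r - 1)) * wk (hHerm hXh hB t) B k
                - (q m).eval (lamf t k) * wk (hHerm hXh hB t) B k
                = (r * (lamf t k) ^ (r - 1) - (q m).eval (lamf t k))
                  * wk (hHerm hXh hB t) B k from by ring]
            rw [abs_mul]
            have h1 : |r * (lamf t k) ^ (r - 1) - (q m).eval (lamf t k)| ≤ 1 / (m + 1) := by
              rw [abs_sub_comm]
              exact le_of_lt (hq m _ (EIG t ht k))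
            exact mul_le_mul h1 (WK t k) (abs_nonneg _) (by positivity)
        _ = ((n : ℝ) * KB) * (1 / (m + 1)) := by
            rw [Finset.sum_const, Finset.card_univ, Fintype.card_fin, nsmul_eq_mul]
            ring
    exact lt_of_le_of_lt hbd hm
  have hpt : ∀ t ∈ s, Filter.Tendsto (fun m => F m t) Filter.atTop
      (nhds ((mpow (X + t • B) r).trace)) := by
    intro t ht
    have hFm : (fun m => F m t) = fun m => ∑ k, (P m).eval (lamf t k) :=
      funext fun m => F_eq hXh hB (P m) t
    rw [hFm, show (mpow (X + t • B) r).trace = ∑ k, (lamf t k) ^ r from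
      trace_mpow (hHerm hXh hB t) r]
    rw [← tendsto_sub_nhds_zero_iff]
    apply squeeze_zero_norm (a := fun m : ℕ => (1 / (m + 1 : ℝ)) * (b - a) * n)
    · intro m
      rw [← Finset.sum_sub_distrib]
      calc ‖∑ k, ((P m).eval (lamf t k) - (lamf t k) ^ r)‖
          ≤ ∑ k, |(P m).eval (lamf t k) - (lamf t k) ^ r| := Finset.abs_sum_le_sum_abs _ _
        _ ≤ ∑ _k : Fin n, (1 / (m + 1)) * (b - a) :=
            Finset.sum_le_sum fun k _ => hPval m _ (EIG t ht k)
        _ = (1 / (m + 1 : ℝ)) * (b - a) * n := by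
            rw [Finset.sum_const, Finset.card_univ, Fintype.card_fin, nsmul_eq_mul]; ring
    · have hl : Filter.Tendsto (fun m : ℕ => (1 / (m + 1 : ℝ))) Filter.atTop (nhds 0) :=
        tendsto_one_div_add_atTop_nhds_zero_nat
      simpa using (hl.mul_const (b - a)).mul_const (n : ℝ)
  have hmain := hasDerivAt_of_tendstoUniformlyOn hsopen hunif
    (Filter.Eventually.of_forall hFderiv) hpt h0s
  have hφ0 : φ 0 = r * (mpow X (r - 1) * B).trace := by
    rw [hφ]
    show r * (mpow (X + (0 : ℝ) • B) (r - 1) * B).trace = _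
    rw [zero_smul, add_zero]
  rwa [hφ0] at hmain
end

section
/- Let A and B be symmetric positive definite n×n real matrices, and for a symmetric matrix M let λ₁(M) ≤ … ≤ λₙ(M) denote its eigenvalues in increasing order. Then for every k ∈ {1,…,n}, λ_k(A)·λ₁(B) ≤ λ_k(B^{1/2}·A·B^{1/2}) ≤ λ_k(A)·λₙ(B), where B^{1/2} is the positive definite square root of B (and B^{1/2}·A·B^{1/2} is similar to A·B, so these are the eigenvalues of A·B). -/
open Matrix

/-- Eigenvalues of a (Hermitian) real matrix sorted in increasing order
(`sortedEig M 0 = λ₁` is the smallest, `sortedEig M (n-1) = λₙ` the largest). -/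
noncomputable def sortedEig {n : ℕ} (M : Matrix (Fin n) (Fin n) ℝ) : Fin n → ℝ :=
  if h : M.IsHermitian then h.eigenvalues ∘ Tuple.sort h.eigenvalues else 0

section Aux

open Module Submodule Finset

variable {n : ℕ} {M : Matrix (Fin n) (Fin n) ℝ}

private lemma sum_dot {ι : Type*} (S : Finset ι) (f : ι → Fin n → ℝ) (v : Fin n → ℝ) :
    (∑ j ∈ S, f j) ⬝ᵥ v = ∑ j ∈ S, f j ⬝ᵥ v := by
  classical
  induction S using Finset.induction with
  | empty => simp
  | insert a s h ih => simp [Finset.sum_insert h, add_dotProduct, ih]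

private lemma dot_sum {ι : Type*} (S : Finset ι) (f : ι → Fin n → ℝ) (v : Fin n → ℝ) :
    v ⬝ᵥ (∑ j ∈ S, f j) = ∑ j ∈ S, v ⬝ᵥ f j := by
  classical
  induction S using Finset.induction with
  | empty => simp
  | insert a s h ih => simp [Finset.sum_insert h, dotProduct_add, ih]

/-- Eigenvectors as plain functions. -/
private noncomputable def evec (h : M.IsHermitian) (j : Fin n) : Fin n → ℝ :=
  (WithLp.equiv 2 _) (h.eigenvectorBasis j)

private lemma evec_dot (h : M.IsHermitian) (i j : Fin n) :
    evec h i ⬝ᵥ evec h j = if i = j then 1 else 0 := by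
  have h2 := orthonormal_iff_ite.mp h.eigenvectorBasis.orthonormal i j
  rw [PiLp.inner_apply] at h2
  rw [← h2]
  refine Finset.sum_congr rfl fun l _ => ?_
  simp [evec, RCLike.inner_apply', mul_comm]

private lemma mulVec_evec (h : M.IsHermitian) (j : Fin n) :
    M *ᵥ evec h j = h.eigenvalues j • evec h j :=
  h.mulVec_eigenvectorBasis j

private lemma evec_li (h : M.IsHermitian) : LinearIndependent ℝ (evec h) := by
  rw [linearIndependent_iff']
  intro s g hsum i hi
  have h2 := congrArg (fun v => v ⬝ᵥ evec h i) hsum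
  simp only [sum_dot, smul_dotProduct, evec_dot, zero_dotProduct,
    smul_eq_mul, mul_ite, mul_one, mul_zero, Finset.sum_ite_eq'] at h2
  rwa [if_pos hi] at h2

private noncomputable def vspan (h : M.IsHermitian) (S : Finset (Fin n)) :
    Submodule ℝ (Fin n → ℝ) :=
  Submodule.span ℝ (Set.range fun j : {i // i ∈ S} => evec h j)

private lemma finrank_vspan (h : M.IsHermitian) (S : Finset (Fin n)) :
    finrank ℝ (vspan h S) = S.card := by
  have li : LinearIndependent ℝ fun j : {i // i ∈ S} => evec h (↑j) :=
    (evec_li h).comp _ Subtype.val_injective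
  rw [vspan, finrank_span_eq_card li]
  exact Fintype.card_coe S

private lemma vspan_repr (h : M.IsHermitian) (S : Finset (Fin n)) {x : Fin n → ℝ}
    (hx : x ∈ vspan h S) : ∃ d : Fin n → ℝ, x = ∑ j ∈ S, d j • evec h j := by
  classical
  rw [vspan, mem_span_range_iff_exists_fun] at hx
  obtain ⟨c, hc⟩ := hx
  refine ⟨fun i => if hi : i ∈ S then c ⟨i, hi⟩ else 0, ?_⟩
  rw [← hc, ← Finset.sum_coe_sort S
    (fun j => (if hj : j ∈ S then c ⟨j, hj⟩ else 0) • evec h j)]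
  refine Finset.sum_congr rfl fun j _ => ?_
  rw [dif_pos j.2]

private lemma dot_expand (h : M.IsHermitian) (S : Finset (Fin n)) (c d : Fin n → ℝ) :
    (∑ j ∈ S, c j • evec h j) ⬝ᵥ (∑ j ∈ S, d j • evec h j) = ∑ j ∈ S, c j * d j := by
  rw [sum_dot]
  refine Finset.sum_congr rfl fun j hj => ?_
  rw [smul_dotProduct, dot_sum]
  rw [Finset.sum_eq_single_of_mem j hj]
  · rw [dotProduct_smul, evec_dot, if_pos rfl]
    simp
  · intro l hl hlj
    rw [dotProduct_smul, evec_dot, if_neg (Ne.symm hlj)]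
    simp

private lemma mulVec_sum_expand (h : M.IsHermitian) (S : Finset (Fin n)) (d : Fin n → ℝ) :
    M *ᵥ (∑ j ∈ S, d j • evec h j) = ∑ j ∈ S, (d j * h.eigenvalues j) • evec h j := by
  rw [← Matrix.mulVecLin_apply, map_sum]
  refine Finset.sum_congr rfl fun j hj => ?_
  rw [LinearMap.map_smul, Matrix.mulVecLin_apply, mulVec_evec, smul_smul]

private lemma quad_ge_vspan (h : M.IsHermitian) (S : Finset (Fin n)) (c : ℝ)
    (hc : ∀ j ∈ S, c ≤ h.eigenvalues j) {x : Fin n → ℝ} (hx : x ∈ vspan h S) :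
    c * (x ⬝ᵥ x) ≤ x ⬝ᵥ (M *ᵥ x) := by
  obtain ⟨d, rfl⟩ := vspan_repr h S hx
  rw [mulVec_sum_expand, dot_expand, dot_expand, Finset.mul_sum]
  refine Finset.sum_le_sum fun j hj => ?_
  nlinarith [hc j hj, mul_self_nonneg (d j)]

private lemma quad_le_vspan (h : M.IsHermitian) (S : Finset (Fin n)) (c : ℝ)
    (hc : ∀ j ∈ S, h.eigenvalues j ≤ c) {x : Fin n → ℝ} (hx : x ∈ vspan h S) :
    x ⬝ᵥ (M *ᵥ x) ≤ c * (x ⬝ᵥ x) := by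
  obtain ⟨d, rfl⟩ := vspan_repr h S hx
  rw [mulVec_sum_expand, dot_expand, dot_expand, Finset.mul_sum]
  refine Finset.sum_le_sum fun j hj => ?_
  nlinarith [hc j hj, mul_self_nonneg (d j)]

private lemma exists_ne_zero_mem_inf (V W : Submodule ℝ (Fin n → ℝ))
    (hd : n < finrank ℝ V + finrank ℝ W) : ∃ x : Fin n → ℝ, x ≠ 0 ∧ x ∈ V ∧ x ∈ W := by
  have h1 := Submodule.finrank_sup_add_finrank_inf_eq V W
  have h2 := Submodule.finrank_le (V ⊔ W)
  rw [Module.finrank_fin_fun] at h2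
  have h3 : 0 < finrank ℝ ↥(V ⊓ W) := by omega
  rw [Module.finrank_pos_iff] at h3
  obtain ⟨y, hy⟩ := exists_ne (0 : ↥(V ⊓ W))
  exact ⟨↑y, fun h0 => hy (Subtype.ext h0), y.2.1, y.2.2⟩

private lemma dot_self_pos {x : Fin n → ℝ} (hx : x ≠ 0) : 0 < x ⬝ᵥ x := by
  have h1 : (0:ℝ) ≤ x ⬝ᵥ x := Finset.sum_nonneg fun i _ => mul_self_nonneg _
  exact lt_of_le_of_ne h1 (Ne.symm (mt dotProduct_self_eq_zero.mp hx))

private lemma sortedEig_eq (h : M.IsHermitian) (k : Fin n) :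
    sortedEig M k = h.eigenvalues (Tuple.sort h.eigenvalues k) := by
  simp only [sortedEig, dif_pos h]
  rfl

private lemma le_sortedEig_of (h : M.IsHermitian) (k : Fin n) (c : ℝ)
    (V : Submodule ℝ (Fin n → ℝ)) (hd : n ≤ finrank ℝ V + k)
    (hq : ∀ x ∈ V, c * (x ⬝ᵥ x) ≤ x ⬝ᵥ (M *ᵥ x)) : c ≤ sortedEig M k := by
  by_contra hlt
  push_neg at hlt
  set σ := Tuple.sort h.eigenvalues with hσ
  set S : Finset (Fin n) := (Finset.Iic k).image σ with hS
  have hcard : S.card = (k : ℕ) + 1 := by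
    rw [hS, Finset.card_image_of_injective _ σ.injective, Fin.card_Iic]
  have hub : ∀ j ∈ S, h.eigenvalues j ≤ sortedEig M k := by
    intro j hj
    rw [hS, Finset.mem_image] at hj
    obtain ⟨i, hi, rfl⟩ := hj
    rw [sortedEig_eq h]
    exact Tuple.monotone_sort h.eigenvalues (Finset.mem_Iic.mp hi)
  obtain ⟨x, hx0, hxV, hxW⟩ := exists_ne_zero_mem_inf V (vspan h S)
    (by rw [finrank_vspan, hcard]; omega)
  have h1 := hq x hxV
  have h2 := quad_le_vspan h S (sortedEig M k) hub hxW
  have h3 := dot_self_pos hx0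
  nlinarith

private lemma sortedEig_le_of (h : M.IsHermitian) (k : Fin n) (c : ℝ)
    (V : Submodule ℝ (Fin n → ℝ)) (hd : (k : ℕ) < finrank ℝ V)
    (hq : ∀ x ∈ V, x ⬝ᵥ (M *ᵥ x) ≤ c * (x ⬝ᵥ x)) : sortedEig M k ≤ c := by
  by_contra hlt
  push_neg at hlt
  set σ := Tuple.sort h.eigenvalues with hσ
  set S : Finset (Fin n) := (Finset.Ici k).image σ with hS
  have hcard : S.card = n - (k : ℕ) := by
    rw [hS, Finset.card_image_of_injective _ σ.injective, Fin.card_Ici]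
  have hub : ∀ j ∈ S, sortedEig M k ≤ h.eigenvalues j := by
    intro j hj
    rw [hS, Finset.mem_image] at hj
    obtain ⟨i, hi, rfl⟩ := hj
    rw [sortedEig_eq h]
    exact Tuple.monotone_sort h.eigenvalues (Finset.mem_Ici.mp hi)
  have hkn : (k : ℕ) < n := k.isLt
  obtain ⟨x, hx0, hxV, hxW⟩ := exists_ne_zero_mem_inf V (vspan h S)
    (by rw [finrank_vspan, hcard]; omega)
  have h1 := hq x hxV
  have h2 := quad_ge_vspan h S (sortedEig M k) hub hxW
  have h3 := dot_self_pos hx0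
  nlinarith

private lemma exists_ge_subspace (h : M.IsHermitian) (k : Fin n) :
    ∃ V : Submodule ℝ (Fin n → ℝ), finrank ℝ V = n - (k : ℕ) ∧
      ∀ x ∈ V, sortedEig M k * (x ⬝ᵥ x) ≤ x ⬝ᵥ (M *ᵥ x) := by
  set σ := Tuple.sort h.eigenvalues with hσ
  refine ⟨vspan h ((Finset.Ici k).image σ), ?_, fun x hx => ?_⟩
  · rw [finrank_vspan, Finset.card_image_of_injective _ σ.injective, Fin.card_Ici]
  · refine quad_ge_vspan h _ _ (fun j hj => ?_) hx
    rw [Finset.mem_image] at hj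
    obtain ⟨i, hi, rfl⟩ := hj
    rw [sortedEig_eq h]
    exact Tuple.monotone_sort h.eigenvalues (Finset.mem_Ici.mp hi)

private lemma exists_le_subspace (h : M.IsHermitian) (k : Fin n) :
    ∃ V : Submodule ℝ (Fin n → ℝ), finrank ℝ V = (k : ℕ) + 1 ∧
      ∀ x ∈ V, x ⬝ᵥ (M *ᵥ x) ≤ sortedEig M k * (x ⬝ᵥ x) := by
  set σ := Tuple.sort h.eigenvalues with hσ
  refine ⟨vspan h ((Finset.Iic k).image σ), ?_, fun x hx => ?_⟩
  · rw [finrank_vspan, Finset.card_image_of_injective _ σ.injective, Fin.card_Iic]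
  · refine quad_le_vspan h _ _ (fun j hj => ?_) hx
    rw [Finset.mem_image] at hj
    obtain ⟨i, hi, rfl⟩ := hj
    rw [sortedEig_eq h]
    exact Tuple.monotone_sort h.eigenvalues (Finset.mem_Iic.mp hi)

end Aux

section Main

open Module Submodule Finset

variable {n : ℕ}

private lemma eigMax_eq {B : Matrix (Fin n) (Fin n) ℝ} (h : B.IsHermitian) :
    eigMax B = ⨆ i, h.eigenvalues i := by
  simp only [eigMax, dif_pos h]

private lemma eigMin_eq {B : Matrix (Fin n) (Fin n) ℝ} (h : B.IsHermitian) :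
    eigMin B = ⨅ i, h.eigenvalues i := by
  simp only [eigMin, dif_pos h]

private lemma spectral_real_s17 {B : Matrix (Fin n) (Fin n) ℝ} (h : B.IsHermitian) :
    B = (h.eigenvectorUnitary : Matrix (Fin n) (Fin n) ℝ) * diagonal h.eigenvalues *
      star (h.eigenvectorUnitary : Matrix (Fin n) (Fin n) ℝ) := by
  simpa using h.spectral_theorem

private lemma conj_diag_psd {B : Matrix (Fin n) (Fin n) ℝ} (h : B.IsHermitian)
    (d : Fin n → ℝ) (hd : ∀ i, 0 ≤ d i) :
    ((h.eigenvectorUnitary : Matrix (Fin n) (Fin n) ℝ) * diagonal d *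
      star (h.eigenvectorUnitary : Matrix (Fin n) (Fin n) ℝ)).PosSemidef := by
  rw [Matrix.star_eq_conjTranspose]
  exact (Matrix.posSemidef_diagonal_iff.mpr hd).mul_mul_conjTranspose_same _

private lemma smul_one_sub_diag {c : ℝ} {g : Fin n → ℝ} :
    diagonal (fun i => c - g i)
      = c • (1 : Matrix (Fin n) (Fin n) ℝ) - diagonal g := by
  rw [Matrix.smul_one_eq_diagonal]
  ext i j
  simp only [Matrix.diagonal_apply, Matrix.sub_apply]
  split <;> simp

private lemma conj_smul_one {B : Matrix (Fin n) (Fin n) ℝ} (h : B.IsHermitian) (c : ℝ) :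
    (h.eigenvectorUnitary : Matrix (Fin n) (Fin n) ℝ) * (c • (1 : Matrix (Fin n) (Fin n) ℝ)) *
      star (h.eigenvectorUnitary : Matrix (Fin n) (Fin n) ℝ)
      = c • (1 : Matrix (Fin n) (Fin n) ℝ) := by
  have hUU : (h.eigenvectorUnitary : Matrix (Fin n) (Fin n) ℝ) *
      star (h.eigenvectorUnitary : Matrix (Fin n) (Fin n) ℝ) = 1 :=
    Matrix.mem_unitaryGroup_iff.mp h.eigenvectorUnitary.2
  rw [mul_smul_comm, smul_mul_assoc, Matrix.mul_one, hUU]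

private lemma quad_le_eigMax {B : Matrix (Fin n) (Fin n) ℝ} (h : B.IsHermitian) (x : Fin n → ℝ) :
    x ⬝ᵥ (B *ᵥ x) ≤ eigMax B * (x ⬝ᵥ x) := by
  have key : eigMax B • (1 : Matrix (Fin n) (Fin n) ℝ) - B
      = (h.eigenvectorUnitary : Matrix (Fin n) (Fin n) ℝ) *
        diagonal (fun i => eigMax B - h.eigenvalues i) *
        star (h.eigenvectorUnitary : Matrix (Fin n) (Fin n) ℝ) := by
    rw [smul_one_sub_diag, Matrix.mul_sub, Matrix.sub_mul, conj_smul_one h]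
    rw [← spectral_real_s17 h]
  have hpsd : (eigMax B • (1 : Matrix (Fin n) (Fin n) ℝ) - B).PosSemidef := by
    rw [key]
    refine conj_diag_psd h _ fun i => sub_nonneg.mpr ?_
    rw [eigMax_eq h]
    exact le_ciSup (Set.Finite.bddAbove (Set.finite_range _)) i
  have h0 := hpsd.dotProduct_mulVec_nonneg x
  rw [star_trivial, Matrix.sub_mulVec, Matrix.smul_mulVec, Matrix.one_mulVec,
      dotProduct_sub, dotProduct_smul, smul_eq_mul] at h0
  linarith

private lemma eigMin_le_quad {B : Matrix (Fin n) (Fin n) ℝ} (h : B.IsHermitian) (x : Fin n → ℝ) :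
    eigMin B * (x ⬝ᵥ x) ≤ x ⬝ᵥ (B *ᵥ x) := by
  have key : B - eigMin B • (1 : Matrix (Fin n) (Fin n) ℝ)
      = (h.eigenvectorUnitary : Matrix (Fin n) (Fin n) ℝ) *
        diagonal (fun i => h.eigenvalues i - eigMin B) *
        star (h.eigenvectorUnitary : Matrix (Fin n) (Fin n) ℝ) := by
    have hd : diagonal (fun i => h.eigenvalues i - eigMin B)
        = diagonal h.eigenvalues - eigMin B • (1 : Matrix (Fin n) (Fin n) ℝ) := by
      rw [Matrix.smul_one_eq_diagonal]
      ext i j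
      simp only [Matrix.diagonal_apply, Matrix.sub_apply]
      split <;> simp
    rw [hd, Matrix.mul_sub, Matrix.sub_mul, conj_smul_one h]
    rw [← spectral_real_s17 h]
  have hpsd : (B - eigMin B • (1 : Matrix (Fin n) (Fin n) ℝ)).PosSemidef := by
    rw [key]
    refine conj_diag_psd h _ fun i => sub_nonneg.mpr ?_
    rw [eigMin_eq h]
    exact ciInf_le (Set.Finite.bddBelow (Set.finite_range _)) i
  have h0 := hpsd.dotProduct_mulVec_nonneg x
  rw [star_trivial, Matrix.sub_mulVec, Matrix.smul_mulVec, Matrix.one_mulVec,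
      dotProduct_sub, dotProduct_smul, smul_eq_mul] at h0
  linarith

private lemma mpow_half_eq {B : Matrix (Fin n) (Fin n) ℝ} (hB : B.PosDef) :
    mpow B ((1:ℝ)/2) = (hB.1.eigenvectorUnitary : Matrix (Fin n) (Fin n) ℝ) *
      diagonal (fun i => hB.1.eigenvalues i ^ ((1:ℝ)/2)) *
      star (hB.1.eigenvectorUnitary : Matrix (Fin n) (Fin n) ℝ) := by
  simp only [mpow, dif_pos hB.1]

private lemma mpow_half_isHermitian {B : Matrix (Fin n) (Fin n) ℝ} (hB : B.PosDef) :
    (mpow B ((1:ℝ)/2)).IsHermitian := by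
  rw [mpow_half_eq hB, Matrix.star_eq_conjTranspose]
  exact Matrix.isHermitian_mul_mul_conjTranspose _ (Matrix.isHermitian_diagonal _)

private lemma mpow_half_mul_self {B : Matrix (Fin n) (Fin n) ℝ} (hB : B.PosDef) :
    mpow B ((1:ℝ)/2) * mpow B ((1:ℝ)/2) = B := by
  have hUU : star (hB.1.eigenvectorUnitary : Matrix (Fin n) (Fin n) ℝ) *
      (hB.1.eigenvectorUnitary : Matrix (Fin n) (Fin n) ℝ) = 1 :=
    Matrix.mem_unitaryGroup_iff'.mp hB.1.eigenvectorUnitary.2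
  rw [mpow_half_eq hB]
  simp only [Matrix.mul_assoc]
  rw [← Matrix.mul_assoc (star (hB.1.eigenvectorUnitary : Matrix (Fin n) (Fin n) ℝ))
      (hB.1.eigenvectorUnitary : Matrix (Fin n) (Fin n) ℝ), hUU, Matrix.one_mul]
  rw [← Matrix.mul_assoc (diagonal _) (diagonal _), Matrix.diagonal_mul_diagonal]
  have hgg : (fun i => hB.1.eigenvalues i ^ ((1:ℝ)/2) * hB.1.eigenvalues i ^ ((1:ℝ)/2))
      = hB.1.eigenvalues := by
    funext i
    rw [← Real.rpow_add (hB.eigenvalues_pos i)]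
    norm_num
  rw [hgg, ← Matrix.mul_assoc, ← spectral_real_s17 hB.1]

private lemma mpow_half_det_isUnit {B : Matrix (Fin n) (Fin n) ℝ} (hB : B.PosDef) :
    IsUnit (mpow B ((1:ℝ)/2)).det := by
  have h1 : (mpow B ((1:ℝ)/2)).det * (mpow B ((1:ℝ)/2)).det = B.det := by
    rw [← Matrix.det_mul, mpow_half_mul_self hB]
  have h2 := hB.det_pos
  refine isUnit_iff_ne_zero.mpr fun h0 => ?_
  rw [h0, mul_zero] at h1
  linarith

end Main

/-- For symmetric positive definite `A, B` and every `k`,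
`λ_k(A)·λ₁(B) ≤ λ_k(B^{1/2} A B^{1/2}) ≤ λ_k(A)·λₙ(B)`, where `B^{1/2}` is the positive
definite square root of `B` (so these are the eigenvalues of `A·B`), `λ₁(B) = λ_min(B)`
and `λₙ(B) = λ_max(B)`. -/
theorem eigenvalues_product_posDef (n : ℕ) (A B : Matrix (Fin n) (Fin n) ℝ)
    (hA : A.PosDef) (hB : B.PosDef) (k : Fin n) :
    sortedEig A k * eigMin B ≤
        sortedEig (mpow B ((1 : ℝ) / 2) * A * mpow B ((1 : ℝ) / 2)) k ∧
      sortedEig (mpow B ((1 : ℝ) / 2) * A * mpow B ((1 : ℝ) / 2)) k ≤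
        sortedEig A k * eigMax B := by
  classical
  have hAH := hA.1
  set Sm := mpow B ((1:ℝ)/2) with hSm
  have hSH : Sm.IsHermitian := mpow_half_isHermitian hB
  have hSS : Sm * Sm = B := mpow_half_mul_self hB
  have hST : Smᵀ = Sm := by
    rw [← Matrix.conjTranspose_eq_transpose_of_trivial]
    exact hSH
  have hCH : (Sm * A * Sm).IsHermitian := by
    show (Sm * A * Sm)ᴴ = Sm * A * Sm
    rw [Matrix.conjTranspose_mul, Matrix.conjTranspose_mul, hSH.eq, hAH.eq, ← Matrix.mul_assoc]
  have hvm : ∀ y : Fin n → ℝ, y ᵥ* Sm = Sm *ᵥ y := by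
    intro y
    conv_lhs => rw [← hST]
    rw [Matrix.vecMul_transpose]
  have hq : ∀ x : Fin n → ℝ, x ⬝ᵥ ((Sm * A * Sm) *ᵥ x) = (Sm *ᵥ x) ⬝ᵥ (A *ᵥ (Sm *ᵥ x)) := by
    intro x
    rw [← Matrix.mulVec_mulVec, ← Matrix.mulVec_mulVec, Matrix.dotProduct_mulVec x Sm, hvm]
  have hqB : ∀ x : Fin n → ℝ, x ⬝ᵥ (B *ᵥ x) = (Sm *ᵥ x) ⬝ᵥ (Sm *ᵥ x) := by
    intro x
    rw [← hSS, ← Matrix.mulVec_mulVec, Matrix.dotProduct_mulVec x Sm, hvm]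
  have hlam : 0 < sortedEig A k := by
    rw [sortedEig_eq hAH]
    exact hA.eigenvalues_pos _
  have hdet : IsUnit Sm.det := mpow_half_det_isUnit hB
  let e : (Fin n → ℝ) ≃ₗ[ℝ] (Fin n → ℝ) :=
    Matrix.toLinearEquiv' Sm (Matrix.invertibleOfIsUnitDet Sm hdet)
  have he : ∀ z : Fin n → ℝ, e z = Sm *ᵥ z := by
    intro z
    have h1 : (↑e : (Fin n → ℝ) →ₗ[ℝ] (Fin n → ℝ)) = Matrix.toLin' Sm :=
      Matrix.toLinearEquiv'_apply Sm _
    calc e z = (↑e : (Fin n → ℝ) →ₗ[ℝ] (Fin n → ℝ)) z := rfl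
      _ = Matrix.toLin' Sm z := by rw [h1]
      _ = Sm *ᵥ z := Matrix.toLin'_apply Sm z
  have hSx : ∀ y : Fin n → ℝ,
      Sm *ᵥ ((e.symm : (Fin n → ℝ) →ₗ[ℝ] (Fin n → ℝ)) y) = y := by
    intro y
    rw [← he]
    exact e.apply_symm_apply y
  constructor
  · -- lower bound
    obtain ⟨V, hVd, hVq⟩ := exists_ge_subspace hAH k
    refine le_sortedEig_of hCH k _ (V.map (e.symm : (Fin n → ℝ) →ₗ[ℝ] (Fin n → ℝ))) ?_ ?_
    · rw [e.symm.finrank_map_eq V, hVd]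
      have := k.isLt
      omega
    · rintro x ⟨y, hy, rfl⟩
      set x := (e.symm : (Fin n → ℝ) →ₗ[ℝ] (Fin n → ℝ)) y with hx
      have hmem : Sm *ᵥ x ∈ V := by rw [hx, hSx]; exact hy
      calc sortedEig A k * eigMin B * (x ⬝ᵥ x)
          ≤ sortedEig A k * (x ⬝ᵥ (B *ᵥ x)) := by
            rw [mul_assoc]
            exact mul_le_mul_of_nonneg_left (eigMin_le_quad hB.1 x) hlam.le
        _ = sortedEig A k * ((Sm *ᵥ x) ⬝ᵥ (Sm *ᵥ x)) := by rw [hqB]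
        _ ≤ (Sm *ᵥ x) ⬝ᵥ (A *ᵥ (Sm *ᵥ x)) := hVq (Sm *ᵥ x) hmem
        _ = x ⬝ᵥ ((Sm * A * Sm) *ᵥ x) := (hq x).symm
  · -- upper bound
    obtain ⟨V, hVd, hVq⟩ := exists_le_subspace hAH k
    refine sortedEig_le_of hCH k _ (V.map (e.symm : (Fin n → ℝ) →ₗ[ℝ] (Fin n → ℝ))) ?_ ?_
    · rw [e.symm.finrank_map_eq V, hVd]
      omega
    · rintro x ⟨y, hy, rfl⟩
      set x := (e.symm : (Fin n → ℝ) →ₗ[ℝ] (Fin n → ℝ)) y with hx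
      have hmem : Sm *ᵥ x ∈ V := by rw [hx, hSx]; exact hy
      calc x ⬝ᵥ ((Sm * A * Sm) *ᵥ x) = (Sm *ᵥ x) ⬝ᵥ (A *ᵥ (Sm *ᵥ x)) := hq x
        _ ≤ sortedEig A k * ((Sm *ᵥ x) ⬝ᵥ (Sm *ᵥ x)) := hVq (Sm *ᵥ x) hmem
        _ = sortedEig A k * (x ⬝ᵥ (B *ᵥ x)) := by rw [hqB]
        _ ≤ sortedEig A k * eigMax B * (x ⬝ᵥ x) := by
            rw [mul_assoc]
            exact mul_le_mul_of_nonneg_left (quad_le_eigMax hB.1 x) hlam.le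
end
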